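/- arXiv:1911.10513 — 4 statements merged into one kernel-verified Lean document; each statement's English description precedes it below -/
import Mathlib

section
/- For finite-dimensional right A-modules M₁ and M₂: f_{M₁⊕M₂}(δ) = f_{M₁}(δ) + f_{M₂}(δ) for all δ ∈ ℤ^n, and consequently N(M₁⊕M₂) equals the Minkowski sum N(M₁) + N(M₂). Moreover, if L is a submodule of M = M₁⊕M₂ whose dimension vector is an extreme point of N(M), then L = (L∩M₁) ⊕ (L∩M₂), and dim(L∩Mᵢ) is an extreme point of N(Mᵢ) for i = 1, 2. -/
/-!  Common setup: tropical F-polynomials and general presentations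
for a finite-dimensional basic algebra `A` over `k`, following Fei,
"Tropical F-polynomials and general presentations".
All modules are *right* `A`-modules, encoded as left `Aᵐᵒᵖ`-modules. -/

namespace TropGP

open Module MulOpposite

section Defs

variable (k : Type) [Field k]
variable (A : Type) [Ring A] [Algebra k A]

/-- The right regular `A`-module structure on `A` is compatible with the `k`-action. -/
instance instTowerOpA : IsScalarTower k Aᵐᵒᵖ A :=
  ⟨fun c b x => by
    rw [MulOpposite.smul_eq_mul_unop, MulOpposite.smul_eq_mul_unop, MulOpposite.unop_smul,
      Algebra.mul_smul_comm]⟩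

/-- Shortcut instance: scalars of `k` commute with the right `A`-action. -/
instance (priority := 5000) instSMulCommOpK (M : Type) [AddCommGroup M] [Module k M]
    [Module Aᵐᵒᵖ M] [IsScalarTower k Aᵐᵒᵖ M] : SMulCommClass Aᵐᵒᵖ k M :=
  IsScalarTower.to_smulCommClass'

variable {n : ℕ} (e : Fin n → A)

/-- Pairing of a weight vector with an integral (dimension) vector. -/
def pz (δ β : Fin n → ℤ) : ℤ := ∑ i, δ i * β i

/-- Pairing of an integral weight vector with a real vector. -/
def przr (δ : Fin n → ℤ) (γ : Fin n → ℝ) : ℝ := ∑ i, (δ i : ℝ) * γ i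

/-- Pairing of two real vectors. -/
def prr (δ γ : Fin n → ℝ) : ℝ := ∑ i, δ i * γ i

variable (M : Type) [AddCommGroup M] [Module k M] [Module Aᵐᵒᵖ M] [IsScalarTower k Aᵐᵒᵖ M]

/-- Right multiplication by `e i`, as a `k`-linear endomorphism of a right `A`-module. -/
noncomputable def rmul (i : Fin n) : M →ₗ[k] M where
  toFun x := op (e i) • x
  map_add' x y := smul_add _ x y
  map_smul' c x := smul_comm _ c x

/-- The dimension vector: `i ↦ dim_k (M eᵢ)`. -/
noncomputable def dimVec : Fin n → ℤ :=
  fun i => (finrank k (LinearMap.range (rmul k A e M i)) : ℤ)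

/-- The real dimension vector. -/
noncomputable def dimVecR : Fin n → ℝ :=
  fun i => (finrank k (LinearMap.range (rmul k A e M i)) : ℝ)

/-- The tropical F-polynomial: `f_M(δ) = max { δ(dim L) : L ⊆ M }`. -/
noncomputable def tropF (δ : Fin n → ℤ) : ℤ :=
  sSup (Set.range fun L : Submodule Aᵐᵒᵖ M => pz δ (dimVec k A e L))

/-- The dual tropical F-polynomial: `f̌_M(δ) = max { δ(dim N) : M ↠ N }`. -/
noncomputable def tropCheck (δ : Fin n → ℤ) : ℤ :=
  sSup (Set.range fun L : Submodule Aᵐᵒᵖ M => pz δ (dimVec k A e (M ⧸ L)))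

/-- The Newton polytope of `M`: the convex hull of dimension vectors of submodules. -/
noncomputable def newton : Set (Fin n → ℝ) :=
  convexHull ℝ {x | ∃ L : Submodule Aᵐᵒᵖ M, x = dimVecR k A e L}

/-- The dual Newton polytope of `M`: convex hull of dimension vectors of quotients. -/
noncomputable def newtonCheck : Set (Fin n → ℝ) :=
  convexHull ℝ {x | ∃ L : Submodule Aᵐᵒᵖ M, x = dimVecR k A e (M ⧸ L)}

/-- King's `δ`-semistability. -/
def IsSemistable (δ : Fin n → ℤ) : Prop :=
  pz δ (dimVec k A e M) = 0 ∧ ∀ L : Submodule Aᵐᵒᵖ M, pz δ (dimVec k A e L) ≤ 0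

/-- `δ`-semistability for a real weight. -/
def IsSemistableR (δ : Fin n → ℝ) : Prop :=
  prr δ (dimVecR k A e M) = 0 ∧ ∀ L : Submodule Aᵐᵒᵖ M, prr δ (dimVecR k A e L) ≤ 0

/-- `δ`-stability. -/
def IsStable (δ : Fin n → ℤ) : Prop :=
  pz δ (dimVec k A e M) = 0 ∧
    ∀ L : Submodule Aᵐᵒᵖ M, L ≠ ⊥ → L ≠ ⊤ → pz δ (dimVec k A e L) < 0

section HomE

variable {P Q : Type} [AddCommGroup P] [Module Aᵐᵒᵖ P] [AddCommGroup Q] [Module Aᵐᵒᵖ Q]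

/-- The `k`-linear map `Hom_A(Q, M) → Hom_A(P, M)` induced by `d : P → Q`. -/
noncomputable def homMap (d : P →ₗ[Aᵐᵒᵖ] Q) : (Q →ₗ[Aᵐᵒᵖ] M) →ₗ[k] (P →ₗ[Aᵐᵒᵖ] M) where
  toFun f := f ∘ₗ d
  map_add' f g := LinearMap.add_comp _ _ _
  map_smul' c f := LinearMap.smul_comp _ _ _

/-- `dim_k Hom(d, M)`: the kernel of the induced map. -/
noncomputable def homNum (d : P →ₗ[Aᵐᵒᵖ] Q) : ℕ :=
  finrank k (LinearMap.ker (homMap k A M d))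

/-- `dim_k E(d, M)`: the cokernel of the induced map. -/
noncomputable def eNum (d : P →ₗ[Aᵐᵒᵖ] Q) : ℕ :=
  finrank k ((P →ₗ[Aᵐᵒᵖ] M) ⧸ LinearMap.range (homMap k A M d))

end HomE

/-- The indecomposable projective right module `e i · A`. -/
abbrev projP (i : Fin n) : Submodule Aᵐᵒᵖ A := Submodule.span Aᵐᵒᵖ {e i}

/-- The projective right module `P(β) = ⊕ᵢ (eᵢA)^{β i}`. -/
abbrev PP (β : Fin n → ℕ) : Type := Π i : Fin n, Fin (β i) → projP A e i

/-- The weight condition `β₊ - β₋ = δ`. -/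
def HasWt (βm βp : Fin n → ℕ) (δ : Fin n → ℤ) : Prop :=
  ∀ i, (βp i : ℤ) - (βm i : ℤ) = δ i

/-- The cokernel of a projective presentation. -/
abbrev Coker {βm βp : Fin n → ℕ} (d : PP A e βm →ₗ[Aᵐᵒᵖ] PP A e βp) : Type :=
  PP A e βp ⧸ LinearMap.range d

/-- `hom(δ, M)`: min of `dim_k Hom(d,M)` over projective presentations `d` of weight `δ`. -/
noncomputable def homWt (δ : Fin n → ℤ) : ℕ :=
  sInf {m : ℕ | ∃ (βm βp : Fin n → ℕ) (d : PP A e βm →ₗ[Aᵐᵒᵖ] PP A e βp),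
    HasWt βm βp δ ∧ m = homNum k A M d}

/-- `e(δ, M)`: min of `dim_k E(d,M)` over projective presentations `d` of weight `δ`. -/
noncomputable def eWt (δ : Fin n → ℤ) : ℕ :=
  sInf {m : ℕ | ∃ (βm βp : Fin n → ℕ) (d : PP A e βm →ₗ[Aᵐᵒᵖ] PP A e βp),
    HasWt βm βp δ ∧ m = eNum k A M d}

/-- The indecomposable left module `A · e i`. -/
abbrev projL (i : Fin n) : Submodule A A := Submodule.span A {e i}

section DualMod

variable (V : Type) [AddCommGroup V] [Module k V] [Module A V] [IsScalarTower k A V]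

/-- Left multiplication by `a` as a `k`-linear endomorphism of a left module. -/
noncomputable def lact (a : A) : V →ₗ[k] V where
  toFun x := a • x
  map_add' x y := smul_add a x y
  map_smul' c x := smul_comm a c x

/-- The right `A`-action on the `k`-dual of a left `A`-module. -/
noncomputable instance dualSMul : SMul Aᵐᵒᵖ (V →ₗ[k] k) :=
  ⟨fun a f => f ∘ₗ lact k A V a.unop⟩

@[simp] lemma dual_smul_apply (a : Aᵐᵒᵖ) (f : V →ₗ[k] k) (x : V) :
    (a • f) x = f (a.unop • x) := rfl

/-- The `k`-dual of a left `A`-module is a right `A`-module. -/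
noncomputable instance dualModule : Module Aᵐᵒᵖ (V →ₗ[k] k) :=
  { dualSMul k A V with
    one_smul := fun f => by ext x; simp
    mul_smul := fun a b f => by ext x; simp [mul_smul]
    smul_zero := fun a => by ext x; simp
    smul_add := fun a f g => by ext x; simp
    add_smul := fun a b f => by ext x; simp [add_smul]
    zero_smul := fun f => by ext x; simp }

instance dualSMulComm : SMulCommClass Aᵐᵒᵖ k (V →ₗ[k] k) :=
  ⟨fun a c f => by ext x; simp⟩

instance dualTower : IsScalarTower k Aᵐᵒᵖ (V →ₗ[k] k) :=
  ⟨fun c a f => by ext x; simp [MulOpposite.unop_smul, smul_assoc]⟩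

end DualMod

/-- The indecomposable injective right module `Iᵢ = D(A eᵢ)`,
the `k`-dual of the left module `A eᵢ`. -/
abbrev IP (i : Fin n) : Type := (projL A e i) →ₗ[k] k

/-- The injective right module `I(β) = ⊕ᵢ Iᵢ^{β i}`. -/
abbrev IM (β : Fin n → ℕ) : Type := Π i : Fin n, Fin (β i) → IP k A e i

section PostMap

variable {I J : Type} [AddCommGroup I] [Module k I] [Module Aᵐᵒᵖ I] [IsScalarTower k Aᵐᵒᵖ I]
variable [AddCommGroup J] [Module k J] [Module Aᵐᵒᵖ J] [IsScalarTower k Aᵐᵒᵖ J]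

/-- The `k`-linear map `Hom_A(M, I) → Hom_A(M, J)` induced by `dc : I → J`. -/
noncomputable def postMap (dc : I →ₗ[Aᵐᵒᵖ] J) :
    (M →ₗ[Aᵐᵒᵖ] I) →ₗ[k] (M →ₗ[Aᵐᵒᵖ] J) where
  toFun f := dc ∘ₗ f
  map_add' f g := LinearMap.comp_add _ _ _
  map_smul' c f := by
    ext x
    simp only [LinearMap.comp_apply, LinearMap.smul_apply, RingHom.id_apply]
    rw [← algebraMap_smul Aᵐᵒᵖ c (f x), LinearMap.map_smul, algebraMap_smul]

end PostMap

/-- `hom(M, δ̌)`: min of `dim_k Hom(M, ď)` over injective presentations `ď` of weight `δ̌`. -/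
noncomputable def ihomWt (δc : Fin n → ℤ) : ℕ :=
  sInf {m : ℕ | ∃ (βp βm : Fin n → ℕ) (dc : IM k A e βp →ₗ[Aᵐᵒᵖ] IM k A e βm),
    HasWt βm βp δc ∧ m = finrank k (LinearMap.ker (postMap k A M dc))}

/-- `ě(M, δ̌)`: min of `dim_k Ě(M, ď)` over injective presentations `ď` of weight `δ̌`. -/
noncomputable def ieWt (δc : Fin n → ℤ) : ℕ :=
  sInf {m : ℕ | ∃ (βp βm : Fin n → ℕ) (dc : IM k A e βp →ₗ[Aᵐᵒᵖ] IM k A e βm),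
    HasWt βm βp δc ∧
      m = Module.finrank k (@HasQuotient.Quotient (M →ₗ[Aᵐᵒᵖ] IM k A e βm) _ Submodule.hasQuotient (LinearMap.range (postMap k A M dc)))}

/-- `e(δ, δ) = 0`: there are projective presentations `d, d'` of weight `δ` with
`E(d, Coker d') = 0`, i.e. the induced map on `Hom`s is surjective. -/
def EWtSelfZero (δ : Fin n → ℤ) : Prop :=
  ∃ (βm βp : Fin n → ℕ) (d : PP A e βm →ₗ[Aᵐᵒᵖ] PP A e βp)
    (βm' βp' : Fin n → ℕ) (d' : PP A e βm' →ₗ[Aᵐᵒᵖ] PP A e βp'),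
    HasWt βm βp δ ∧ HasWt βm' βp' δ ∧
      Function.Surjective (homMap k A (Coker A e d') d)

/-- `e₁, …, e_n` is a complete set of primitive orthogonal idempotents and `A` is basic:
the indecomposable projectives `eᵢA` are pairwise non-isomorphic. -/
def IsBasicSetup : Prop :=
  (∀ i, IsIdempotentElem (e i)) ∧
  (∀ i j, i ≠ j → e i * e j = 0) ∧
  (∑ i, e i = 1) ∧
  (∀ i, e i ≠ 0 ∧ ∀ f g : A, IsIdempotentElem f → IsIdempotentElem g →
      f * g = 0 → g * f = 0 → f + g = e i → f = 0 ∨ g = 0) ∧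
  (∀ i j, i ≠ j → IsEmpty (projP A e i ≃ₗ[Aᵐᵒᵖ] projP A e j))

end Defs

end TropGP

section Helpers

namespace TropGP

open Module MulOpposite LinearMap

variable (k : Type) [Field k]
variable (A : Type) [Ring A] [Algebra k A]
variable {n : ℕ} (e : Fin n → A)

/-- `dim_k (M eᵢ)` as a natural number. -/
noncomputable def dN (M : Type) [AddCommGroup M] [Module k M] [Module Aᵐᵒᵖ M]
    [IsScalarTower k Aᵐᵒᵖ M] (i : Fin n) : ℕ :=
  finrank k (LinearMap.range (rmul k A e M i))

lemma dimVec_eq_dN (M : Type) [AddCommGroup M] [Module k M] [Module Aᵐᵒᵖ M]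
    [IsScalarTower k Aᵐᵒᵖ M] (i : Fin n) : dimVec k A e M i = (dN k A e M i : ℤ) := rfl

lemma dimVecR_eq_dN (M : Type) [AddCommGroup M] [Module k M] [Module Aᵐᵒᵖ M]
    [IsScalarTower k Aᵐᵒᵖ M] (i : Fin n) : dimVecR k A e M i = (dN k A e M i : ℝ) := rfl

lemma rmul_apply (M : Type) [AddCommGroup M] [Module k M] [Module Aᵐᵒᵖ M]
    [IsScalarTower k Aᵐᵒᵖ M] (i : Fin n) (x : M) : rmul k A e M i x = op (e i) • x := rfl

section Insts

variable {M : Type} [AddCommGroup M] [Module k M] [Module Aᵐᵒᵖ M] [IsScalarTower k Aᵐᵒᵖ M]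

instance instFDSub [FiniteDimensional k M] (p : Submodule Aᵐᵒᵖ M) : FiniteDimensional k p :=
  FiniteDimensional.of_injective (p.subtype.restrictScalars k) p.injective_subtype

instance instFDQuot [FiniteDimensional k M] (p : Submodule Aᵐᵒᵖ M) :
    FiniteDimensional k (M ⧸ p) :=
  FiniteDimensional.of_surjective (p.mkQ.restrictScalars k) p.mkQ_surjective

end Insts

section Core

variable {X Y Z : Type}
variable [AddCommGroup X] [Module k X] [Module Aᵐᵒᵖ X] [IsScalarTower k Aᵐᵒᵖ X]
variable [AddCommGroup Y] [Module k Y] [Module Aᵐᵒᵖ Y] [IsScalarTower k Aᵐᵒᵖ Y]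
variable [AddCommGroup Z] [Module k Z] [Module Aᵐᵒᵖ Z] [IsScalarTower k Aᵐᵒᵖ Z]

/-- `dN` is invariant under `Aᵐᵒᵖ`-linear isomorphism. -/
lemma dN_congr (φ : X ≃ₗ[Aᵐᵒᵖ] Y) (i : Fin n) : dN k A e X i = dN k A e Y i := by
  have h : Submodule.map ((φ.restrictScalars k : X ≃ₗ[k] Y) : X →ₗ[k] Y)
      (LinearMap.range (rmul k A e X i)) = LinearMap.range (rmul k A e Y i) := by
    ext y
    simp only [Submodule.mem_map, LinearMap.mem_range]
    constructor
    · rintro ⟨x, ⟨w, rfl⟩, rfl⟩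
      exact ⟨φ w, by simp [rmul_apply, map_smul]⟩
    · rintro ⟨z, rfl⟩
      refine ⟨op (e i) • φ.symm z, ⟨φ.symm z, rfl⟩, ?_⟩
      simp [rmul_apply, map_smul]
  rw [dN, dN, ← h, LinearEquiv.finrank_map_eq]

/-- Additivity of `dN` in short exact sequences, for idempotent `e i`. -/
lemma dN_add [FiniteDimensional k Y]
    (f : X →ₗ[Aᵐᵒᵖ] Y) (g : Y →ₗ[Aᵐᵒᵖ] Z) (hf : Function.Injective f)
    (hg : Function.Surjective g) (hfg : LinearMap.range f = LinearMap.ker g)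
    (i : Fin n) (hi : IsIdempotentElem (e i)) :
    dN k A e Y i = dN k A e X i + dN k A e Z i := by
  set Xe := LinearMap.range (rmul k A e X i) with hXe
  set Ye := LinearMap.range (rmul k A e Y i) with hYe
  set h : Ye →ₗ[k] Z := (g.restrictScalars k) ∘ₗ Ye.subtype with hh
  have hop : ∀ y : Y, y ∈ Ye → op (e i) • y = y := by
    rintro _ ⟨w, rfl⟩
    rw [rmul_apply, smul_smul, ← op_mul, hi]
  have hrange : LinearMap.range h = LinearMap.range (rmul k A e Z i) := by
    ext z
    simp only [LinearMap.mem_range]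
    constructor
    · rintro ⟨⟨y, hy⟩, rfl⟩
      refine ⟨g y, ?_⟩
      rw [rmul_apply, ← map_smul g, hop y hy]
      rfl
    · rintro ⟨w, rfl⟩
      obtain ⟨v, rfl⟩ := hg w
      refine ⟨⟨op (e i) • v, ⟨v, rfl⟩⟩, ?_⟩
      show g (op (e i) • v) = op (e i) • g v
      rw [map_smul]
  have hker : Submodule.map Ye.subtype (LinearMap.ker h)
      = Submodule.map (f.restrictScalars k) Xe := by
    ext y
    simp only [Submodule.mem_map, LinearMap.mem_ker]
    constructor
    · rintro ⟨⟨y, hy⟩, hgy, rfl⟩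
      have hgy' : g y = 0 := hgy
      have : y ∈ LinearMap.range f := hfg ▸ hgy'
      obtain ⟨x, rfl⟩ := this
      refine ⟨op (e i) • x, ⟨x, rfl⟩, ?_⟩
      show f (op (e i) • x) = f x
      rw [map_smul]
      exact hop _ hy
    · rintro ⟨_, ⟨x, rfl⟩, rfl⟩
      have hmem : (f.restrictScalars k) (rmul k A e X i x) ∈ Ye := by
        refine ⟨f x, ?_⟩
        show op (e i) • f x = f (op (e i) • x)
        rw [map_smul]
      refine ⟨⟨_, hmem⟩, ?_, rfl⟩
      show g ((f.restrictScalars k) (rmul k A e X i x)) = 0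
      have : f (op (e i) • x) ∈ LinearMap.ker g := by
        rw [← hfg]; exact ⟨_, rfl⟩
      exact this
  have h1 : finrank k Ye = finrank k (LinearMap.range h) + finrank k (LinearMap.ker h) :=
    (LinearMap.finrank_range_add_finrank_ker h).symm
  have h2 : finrank k (LinearMap.ker h) = finrank k Xe := by
    rw [LinearEquiv.finrank_eq (Submodule.equivMapOfInjective Ye.subtype
      Ye.injective_subtype (LinearMap.ker h)), hker]
    exact (LinearEquiv.finrank_eq (Submodule.equivMapOfInjective (f.restrictScalars k) hf Xe)).symm
  rw [dN, dN, dN, ← hXe, ← hYe, h1, hrange, h2, Nat.add_comm]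

end Core

end TropGP

end Helpers

section Helpers2

namespace TropGP

open Module MulOpposite LinearMap

variable (k : Type) [Field k]
variable (A : Type) [Ring A] [Algebra k A]
variable {n : ℕ} (e : Fin n → A)

section EqOfLe

variable {M : Type} [AddCommGroup M] [Module k M] [Module Aᵐᵒᵖ M] [IsScalarTower k Aᵐᵒᵖ M]

/-- If `p ≤ q` have the same dimension vector, they are equal. -/
lemma eq_of_le_of_dN [FiniteDimensional k M]
    (hsum : ∑ i, e i = 1) (hid : ∀ i, IsIdempotentElem (e i))
    {p q : Submodule Aᵐᵒᵖ M} (hpq : p ≤ q)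
    (hd : ∀ i, dN k A e p i = dN k A e q i) : p = q := by
  set pq : Submodule Aᵐᵒᵖ q := Submodule.comap q.subtype p with hpqdef
  have hadd : ∀ i, dN k A e q i = dN k A e pq i + dN k A e (q ⧸ pq) i := fun i =>
    dN_add k A e pq.subtype pq.mkQ pq.injective_subtype pq.mkQ_surjective
      (by rw [Submodule.range_subtype, Submodule.ker_mkQ]) i (hid i)
  have hiso : ∀ i, dN k A e pq i = dN k A e p i := fun i =>
    dN_congr k A e (Submodule.comapSubtypeEquivOfLe hpq) i
  have hz : ∀ i, dN k A e (q ⧸ pq) i = 0 := by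
    intro i
    have := hadd i
    rw [hiso i, hd i] at this
    omega
  have hbot : ∀ i, LinearMap.range (rmul k A e (q ⧸ pq) i) = ⊥ := by
    intro i
    have := hz i
    rw [dN] at this
    exact Submodule.finrank_eq_zero.mp this
  have hzero : ∀ z : q ⧸ pq, z = 0 := by
    intro z
    have h1 : z = (op (∑ i, e i) : Aᵐᵒᵖ) • z := by rw [hsum]; simp
    have hops : (op (∑ i, e i) : Aᵐᵒᵖ) = ∑ i, op (e i) :=
      map_sum (MulOpposite.opAddEquiv (α := A)) _ _
    rw [hops, Finset.sum_smul] at h1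
    have h2 : ∀ i ∈ Finset.univ, (op (e i) : Aᵐᵒᵖ) • z = 0 := by
      intro i _
      have hmem : (op (e i)) • z ∈ LinearMap.range (rmul k A e (q ⧸ pq) i) := ⟨z, rfl⟩
      rwa [hbot i, Submodule.mem_bot] at hmem
    rw [Finset.sum_congr rfl h2, Finset.sum_const_zero] at h1
    exact h1
  have hle : q ≤ p := by
    intro x hx
    have h0 : pq.mkQ ⟨x, hx⟩ = 0 := hzero _
    have : (⟨x, hx⟩ : q) ∈ pq := by rwa [← Submodule.ker_mkQ pq, LinearMap.mem_ker]
    exact this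
  exact le_antisymm hpq hle

end EqOfLe

end TropGP

end Helpers2

section Helpers3

namespace TropGP

open Module MulOpposite LinearMap

variable (k : Type) [Field k]
variable (A : Type) [Ring A] [Algebra k A]
variable {n : ℕ} (e : Fin n → A)

variable {M₁ M₂ : Type}
variable [AddCommGroup M₁] [Module k M₁] [Module Aᵐᵒᵖ M₁] [IsScalarTower k Aᵐᵒᵖ M₁]
variable [AddCommGroup M₂] [Module k M₂] [Module Aᵐᵒᵖ M₂] [IsScalarTower k Aᵐᵒᵖ M₂]

lemma dN_split_left [FiniteDimensional k M₁] [FiniteDimensional k M₂]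
    (L : Submodule Aᵐᵒᵖ (M₁ × M₂)) (i : Fin n) (hi : IsIdempotentElem (e i)) :
    dN k A e L i = dN k A e (Submodule.comap (LinearMap.inl Aᵐᵒᵖ M₁ M₂) L) i
      + dN k A e (Submodule.map (LinearMap.snd Aᵐᵒᵖ M₁ M₂) L) i := by
  set X : Submodule Aᵐᵒᵖ M₁ := Submodule.comap (LinearMap.inl Aᵐᵒᵖ M₁ M₂) L with hX
  set Z : Submodule Aᵐᵒᵖ M₂ := Submodule.map (LinearMap.snd Aᵐᵒᵖ M₁ M₂) L with hZ
  set f : X →ₗ[Aᵐᵒᵖ] L :=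
    (LinearMap.inl Aᵐᵒᵖ M₁ M₂).restrict (p := X) (q := L) (fun x hx => hx) with hf
  set g : L →ₗ[Aᵐᵒᵖ] Z :=
    (LinearMap.snd Aᵐᵒᵖ M₁ M₂).restrict (p := L) (q := Z)
      (fun x hx => Submodule.mem_map_of_mem hx) with hg
  have hfval : ∀ x : X, (f x : M₁ × M₂) = ((x : M₁), 0) := fun x => rfl
  have hgval : ∀ y : L, (g y : M₂) = (y : M₁ × M₂).2 := fun y => rfl
  have hfi : Function.Injective f := by
    intro a b hab
    have := congrArg (fun t : L => (t : M₁ × M₂).1) hab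
    simpa [hfval] using Subtype.ext this
  have hgs : Function.Surjective g := by
    rintro ⟨z, hz⟩
    rw [Submodule.mem_map] at hz
    obtain ⟨w, hw, rfl⟩ := hz
    exact ⟨⟨w, hw⟩, rfl⟩
  have hfg : LinearMap.range f = LinearMap.ker g := by
    ext y
    simp only [LinearMap.mem_range, LinearMap.mem_ker]
    constructor
    · rintro ⟨x, rfl⟩
      apply Subtype.ext
      simp [hgval, hfval]
    · intro hy
      have h2 : (y : M₁ × M₂).2 = 0 := by
        have := congrArg (Subtype.val) hy
        simpa [hgval] using this
      have hmem : (LinearMap.inl Aᵐᵒᵖ M₁ M₂) (y : M₁ × M₂).1 ∈ L := by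
        have : ((y : M₁ × M₂).1, (0 : M₂)) = (y : M₁ × M₂) := by
          ext <;> simp [h2.symm]
        simpa [this] using y.2
      refine ⟨⟨(y : M₁ × M₂).1, hmem⟩, ?_⟩
      apply Subtype.ext
      rw [hfval]
      exact (Prod.ext rfl h2.symm)
  exact dN_add k A e f g hfi hgs hfg i hi

lemma dN_split_right [FiniteDimensional k M₁] [FiniteDimensional k M₂]
    (L : Submodule Aᵐᵒᵖ (M₁ × M₂)) (i : Fin n) (hi : IsIdempotentElem (e i)) :
    dN k A e L i = dN k A e (Submodule.comap (LinearMap.inr Aᵐᵒᵖ M₁ M₂) L) i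
      + dN k A e (Submodule.map (LinearMap.fst Aᵐᵒᵖ M₁ M₂) L) i := by
  set X : Submodule Aᵐᵒᵖ M₂ := Submodule.comap (LinearMap.inr Aᵐᵒᵖ M₁ M₂) L with hX
  set Z : Submodule Aᵐᵒᵖ M₁ := Submodule.map (LinearMap.fst Aᵐᵒᵖ M₁ M₂) L with hZ
  set f : X →ₗ[Aᵐᵒᵖ] L :=
    (LinearMap.inr Aᵐᵒᵖ M₁ M₂).restrict (p := X) (q := L) (fun x hx => hx) with hf
  set g : L →ₗ[Aᵐᵒᵖ] Z :=
    (LinearMap.fst Aᵐᵒᵖ M₁ M₂).restrict (p := L) (q := Z)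
      (fun x hx => Submodule.mem_map_of_mem hx) with hg
  have hfval : ∀ x : X, (f x : M₁ × M₂) = (0, (x : M₂)) := fun x => rfl
  have hgval : ∀ y : L, (g y : M₁) = (y : M₁ × M₂).1 := fun y => rfl
  have hfi : Function.Injective f := by
    intro a b hab
    have := congrArg (fun t : L => (t : M₁ × M₂).2) hab
    simpa [hfval] using Subtype.ext this
  have hgs : Function.Surjective g := by
    rintro ⟨z, hz⟩
    rw [Submodule.mem_map] at hz
    obtain ⟨w, hw, rfl⟩ := hz
    exact ⟨⟨w, hw⟩, rfl⟩
  have hfg : LinearMap.range f = LinearMap.ker g := by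
    ext y
    simp only [LinearMap.mem_range, LinearMap.mem_ker]
    constructor
    · rintro ⟨x, rfl⟩
      apply Subtype.ext
      simp [hgval, hfval]
    · intro hy
      have h2 : (y : M₁ × M₂).1 = 0 := by
        have := congrArg (Subtype.val) hy
        simpa [hgval] using this
      have hmem : (LinearMap.inr Aᵐᵒᵖ M₁ M₂) (y : M₁ × M₂).2 ∈ L := by
        have : ((0 : M₁), (y : M₁ × M₂).2) = (y : M₁ × M₂) := by
          ext <;> simp [h2.symm]
        simpa [this] using y.2
      refine ⟨⟨(y : M₁ × M₂).2, hmem⟩, ?_⟩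
      apply Subtype.ext
      rw [hfval]
      exact (Prod.ext h2.symm rfl)
  exact dN_add k A e f g hfi hgs hfg i hi

lemma comap_inl_prod (p : Submodule Aᵐᵒᵖ M₁) (q : Submodule Aᵐᵒᵖ M₂) :
    Submodule.comap (LinearMap.inl Aᵐᵒᵖ M₁ M₂) (p.prod q) = p := by
  ext x
  simp [Submodule.mem_comap, Submodule.mem_prod]

lemma map_snd_prod (p : Submodule Aᵐᵒᵖ M₁) (q : Submodule Aᵐᵒᵖ M₂) :
    Submodule.map (LinearMap.snd Aᵐᵒᵖ M₁ M₂) (p.prod q) = q := by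
  ext z
  simp only [Submodule.mem_map, Submodule.mem_prod]
  constructor
  · rintro ⟨w, ⟨_, hw2⟩, rfl⟩; exact hw2
  · intro hz; exact ⟨(0, z), ⟨p.zero_mem, hz⟩, rfl⟩

lemma dN_prod [FiniteDimensional k M₁] [FiniteDimensional k M₂]
    (p : Submodule Aᵐᵒᵖ M₁) (q : Submodule Aᵐᵒᵖ M₂) (i : Fin n)
    (hi : IsIdempotentElem (e i)) :
    dN k A e (p.prod q) i = dN k A e p i + dN k A e q i := by
  rw [dN_split_left k A e (p.prod q) i hi, comap_inl_prod, map_snd_prod]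

end TropGP

end Helpers3

section Helpers4

namespace TropGP

open Module MulOpposite LinearMap

variable (k : Type) [Field k]
variable (A : Type) [Ring A] [Algebra k A]
variable {n : ℕ} (e : Fin n → A)

section Bound

variable {N : Type} [AddCommGroup N] [Module k N] [Module Aᵐᵒᵖ N] [IsScalarTower k Aᵐᵒᵖ N]

lemma pz_le_bound [FiniteDimensional k N] (δ : Fin n → ℤ) (L : Submodule Aᵐᵒᵖ N) :
    pz δ (dimVec k A e L) ≤ ∑ i, |δ i| * (finrank k N : ℤ) := by
  rw [pz]
  apply Finset.sum_le_sum
  intro i _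
  rw [dimVec_eq_dN]
  have h0 : (0 : ℤ) ≤ (dN k A e L i : ℤ) := Int.natCast_nonneg _
  have h1 : (dN k A e L i : ℤ) ≤ (finrank k N : ℤ) := by
    have := le_trans (Submodule.finrank_le (LinearMap.range (rmul k A e L i)))
      (LinearMap.finrank_le_finrank_of_injective
        (f := L.subtype.restrictScalars k) L.injective_subtype)
    exact_mod_cast this
  calc δ i * (dN k A e L i : ℤ) ≤ |δ i| * (dN k A e L i : ℤ) :=
        mul_le_mul_of_nonneg_right (le_abs_self _) h0
    _ ≤ |δ i| * (finrank k N : ℤ) := mul_le_mul_of_nonneg_left h1 (abs_nonneg _)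

lemma tropF_bdd [FiniteDimensional k N] (δ : Fin n → ℤ) :
    BddAbove (Set.range fun L : Submodule Aᵐᵒᵖ N => pz δ (dimVec k A e L)) :=
  ⟨∑ i, |δ i| * (finrank k N : ℤ), by rintro x ⟨L, rfl⟩; exact pz_le_bound k A e δ L⟩

end Bound

section PzSplit

variable {M₁ M₂ : Type}
variable [AddCommGroup M₁] [Module k M₁] [Module Aᵐᵒᵖ M₁] [IsScalarTower k Aᵐᵒᵖ M₁]
variable [AddCommGroup M₂] [Module k M₂] [Module Aᵐᵒᵖ M₂] [IsScalarTower k Aᵐᵒᵖ M₂]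
variable [FiniteDimensional k M₁] [FiniteDimensional k M₂]

lemma pz_split (hid : ∀ i, IsIdempotentElem (e i)) (δ : Fin n → ℤ)
    (L : Submodule Aᵐᵒᵖ (M₁ × M₂)) :
    pz δ (dimVec k A e L)
      = pz δ (dimVec k A e (Submodule.comap (LinearMap.inl Aᵐᵒᵖ M₁ M₂) L))
        + pz δ (dimVec k A e (Submodule.map (LinearMap.snd Aᵐᵒᵖ M₁ M₂) L)) := by
  rw [pz, pz, pz, ← Finset.sum_add_distrib]
  refine Finset.sum_congr rfl fun i _ => ?_
  rw [dimVec_eq_dN, dimVec_eq_dN, dimVec_eq_dN, dN_split_left k A e L i (hid i)]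
  push_cast
  ring

lemma pz_prod (hid : ∀ i, IsIdempotentElem (e i)) (δ : Fin n → ℤ)
    (p : Submodule Aᵐᵒᵖ M₁) (q : Submodule Aᵐᵒᵖ M₂) :
    pz δ (dimVec k A e (p.prod q)) = pz δ (dimVec k A e p) + pz δ (dimVec k A e q) := by
  rw [pz, pz, pz, ← Finset.sum_add_distrib]
  refine Finset.sum_congr rfl fun i _ => ?_
  rw [dimVec_eq_dN, dimVec_eq_dN, dimVec_eq_dN, dN_prod k A e p q i (hid i)]
  push_cast
  ring

lemma dimVecR_prod (hid : ∀ i, IsIdempotentElem (e i))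
    (p : Submodule Aᵐᵒᵖ M₁) (q : Submodule Aᵐᵒᵖ M₂) :
    dimVecR k A e (p.prod q) = dimVecR k A e p + dimVecR k A e q := by
  funext i
  rw [Pi.add_apply, dimVecR_eq_dN, dimVecR_eq_dN, dimVecR_eq_dN,
    dN_prod k A e p q i (hid i)]
  push_cast
  ring

lemma dN_map_inl (p : Submodule Aᵐᵒᵖ M₁) (i : Fin n) :
    dN k A e (Submodule.map (LinearMap.inl Aᵐᵒᵖ M₁ M₂) p) i = dN k A e p i :=
  (dN_congr k A e (Submodule.equivMapOfInjective (LinearMap.inl Aᵐᵒᵖ M₁ M₂)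
    (LinearMap.inl_injective) p) i).symm

lemma dN_map_inr (p : Submodule Aᵐᵒᵖ M₂) (i : Fin n) :
    dN k A e (Submodule.map (LinearMap.inr Aᵐᵒᵖ M₁ M₂) p) i = dN k A e p i :=
  (dN_congr k A e (Submodule.equivMapOfInjective (LinearMap.inr Aᵐᵒᵖ M₁ M₂)
    (LinearMap.inr_injective) p) i).symm

lemma inf_range_inl (L : Submodule Aᵐᵒᵖ (M₁ × M₂)) :
    L ⊓ LinearMap.range (LinearMap.inl Aᵐᵒᵖ M₁ M₂)
      = Submodule.map (LinearMap.inl Aᵐᵒᵖ M₁ M₂)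
          (Submodule.comap (LinearMap.inl Aᵐᵒᵖ M₁ M₂) L) := by
  rw [Submodule.map_comap_eq, inf_comm]

lemma inf_range_inr (L : Submodule Aᵐᵒᵖ (M₁ × M₂)) :
    L ⊓ LinearMap.range (LinearMap.inr Aᵐᵒᵖ M₁ M₂)
      = Submodule.map (LinearMap.inr Aᵐᵒᵖ M₁ M₂)
          (Submodule.comap (LinearMap.inr Aᵐᵒᵖ M₁ M₂) L) := by
  rw [Submodule.map_comap_eq, inf_comm]

end PzSplit

end TropGP

end Helpers4

open TropGP Module MulOpposite Pointwise

/-- `f_{M₁⊕M₂} = f_{M₁} + f_{M₂}`, hence `N(M₁⊕M₂)` is the Minkowski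
sum `N(M₁) + N(M₂)`; moreover a submodule `L ⊆ M₁⊕M₂` whose dimension vector is an
extreme point of `N(M₁⊕M₂)` decomposes as `L = (L∩M₁) ⊕ (L∩M₂)` and `dim (L∩Mᵢ)` is an
extreme point of `N(Mᵢ)`. -/
theorem statement7 (k : Type) [Field k] [IsAlgClosed k] [CharZero k]
    (A : Type) [Ring A] [Algebra k A] [FiniteDimensional k A]
    {n : ℕ} (e : Fin n → A) (hA : IsBasicSetup A e)
    (M₁ M₂ : Type) [AddCommGroup M₁] [Module k M₁] [Module Aᵐᵒᵖ M₁]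
    [IsScalarTower k Aᵐᵒᵖ M₁] [FiniteDimensional k M₁]
    [AddCommGroup M₂] [Module k M₂] [Module Aᵐᵒᵖ M₂]
    [IsScalarTower k Aᵐᵒᵖ M₂] [FiniteDimensional k M₂] :
    (∀ δ : Fin n → ℤ,
      tropF k A e (M₁ × M₂) δ = tropF k A e M₁ δ + tropF k A e M₂ δ) ∧
    newton k A e (M₁ × M₂) = newton k A e M₁ + newton k A e M₂ ∧
    (∀ L : Submodule Aᵐᵒᵖ (M₁ × M₂),
      dimVecR k A e L ∈ Set.extremePoints ℝ (newton k A e (M₁ × M₂)) →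
      L = (L ⊓ LinearMap.range (LinearMap.inl Aᵐᵒᵖ M₁ M₂)) ⊔
            (L ⊓ LinearMap.range (LinearMap.inr Aᵐᵒᵖ M₁ M₂)) ∧
      dimVecR k A e (L ⊓ LinearMap.range (LinearMap.inl Aᵐᵒᵖ M₁ M₂) : Submodule Aᵐᵒᵖ (M₁ × M₂))
        ∈ Set.extremePoints ℝ (newton k A e M₁) ∧
      dimVecR k A e (L ⊓ LinearMap.range (LinearMap.inr Aᵐᵒᵖ M₁ M₂) : Submodule Aᵐᵒᵖ (M₁ × M₂))
        ∈ Set.extremePoints ℝ (newton k A e M₂)) := by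
  obtain ⟨hid, -, hsum, -, -⟩ := hA
  -- dimension-vector of any submodule is the midpoint of two "product" submodules
  have hmid : ∀ L : Submodule Aᵐᵒᵖ (M₁ × M₂),
      dimVecR k A e L = (1/2 : ℝ) • dimVecR k A e
          ((Submodule.comap (LinearMap.inl Aᵐᵒᵖ M₁ M₂) L).prod
            (Submodule.comap (LinearMap.inr Aᵐᵒᵖ M₁ M₂) L))
        + (1/2 : ℝ) • dimVecR k A e
          ((Submodule.map (LinearMap.fst Aᵐᵒᵖ M₁ M₂) L).prod
            (Submodule.map (LinearMap.snd Aᵐᵒᵖ M₁ M₂) L)) := by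
    intro L
    funext i
    have h1 := dN_split_left k A e L i (hid i)
    have h2 := dN_split_right k A e L i (hid i)
    have hp1 := dN_prod k A e (Submodule.comap (LinearMap.inl Aᵐᵒᵖ M₁ M₂) L)
      (Submodule.comap (LinearMap.inr Aᵐᵒᵖ M₁ M₂) L) i (hid i)
    have hp2 := dN_prod k A e (Submodule.map (LinearMap.fst Aᵐᵒᵖ M₁ M₂) L)
      (Submodule.map (LinearMap.snd Aᵐᵒᵖ M₁ M₂) L) i (hid i)
    simp only [Pi.add_apply, Pi.smul_apply, smul_eq_mul, dimVecR_eq_dN]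
    rw [hp1, hp2]
    have e1 : 2 * dN k A e L i
        = (dN k A e (Submodule.comap (LinearMap.inl Aᵐᵒᵖ M₁ M₂) L) i
            + dN k A e (Submodule.comap (LinearMap.inr Aᵐᵒᵖ M₁ M₂) L) i)
          + (dN k A e (Submodule.map (LinearMap.fst Aᵐᵒᵖ M₁ M₂) L) i
            + dN k A e (Submodule.map (LinearMap.snd Aᵐᵒᵖ M₁ M₂) L) i) := by omega
    have e1' : (2 : ℝ) * dN k A e L i
        = ((dN k A e (Submodule.comap (LinearMap.inl Aᵐᵒᵖ M₁ M₂) L) i : ℝ)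
            + dN k A e (Submodule.comap (LinearMap.inr Aᵐᵒᵖ M₁ M₂) L) i)
          + ((dN k A e (Submodule.map (LinearMap.fst Aᵐᵒᵖ M₁ M₂) L) i : ℝ)
            + dN k A e (Submodule.map (LinearMap.snd Aᵐᵒᵖ M₁ M₂) L) i) := by
      exact_mod_cast e1
    push_cast
    linarith
  -- the tropical F-polynomial is additive
  have htrop : ∀ δ : Fin n → ℤ,
      tropF k A e (M₁ × M₂) δ = tropF k A e M₁ δ + tropF k A e M₂ δ := by
    intro δ
    have ne1 : (Set.range fun L : Submodule Aᵐᵒᵖ M₁ =>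
        pz δ (dimVec k A e L)).Nonempty := Set.range_nonempty _
    have ne2 : (Set.range fun L : Submodule Aᵐᵒᵖ M₂ =>
        pz δ (dimVec k A e L)).Nonempty := Set.range_nonempty _
    have ne12 : (Set.range fun L : Submodule Aᵐᵒᵖ (M₁ × M₂) =>
        pz δ (dimVec k A e L)).Nonempty := Set.range_nonempty _
    have bdd1 := tropF_bdd k A e (N := M₁) δ
    have bdd2 := tropF_bdd k A e (N := M₂) δ
    have bdd12 := tropF_bdd k A e (N := M₁ × M₂) δ
    rw [tropF, tropF, tropF]
    apply le_antisymm
    · apply csSup_le ne12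
      rintro x ⟨L, rfl⟩
      dsimp only
      rw [pz_split k A e hid δ L]
      exact add_le_add (le_csSup bdd1 ⟨_, rfl⟩) (le_csSup bdd2 ⟨_, rfl⟩)
    · obtain ⟨L₁, hL₁⟩ := Int.csSup_mem ne1 bdd1
      obtain ⟨L₂, hL₂⟩ := Int.csSup_mem ne2 bdd2
      rw [← hL₁, ← hL₂, ← pz_prod k A e hid δ L₁ L₂]
      exact le_csSup bdd12 ⟨_, rfl⟩
  -- the Newton polytope is a Minkowski sum
  have hS1 : {x | ∃ L : Submodule Aᵐᵒᵖ M₁, x = dimVecR k A e L}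
      + {x | ∃ L : Submodule Aᵐᵒᵖ M₂, x = dimVecR k A e L}
      ⊆ {x | ∃ L : Submodule Aᵐᵒᵖ (M₁ × M₂), x = dimVecR k A e L} := by
    rintro x hx
    rw [Set.mem_add] at hx
    obtain ⟨a, ⟨L₁, rfl⟩, b, ⟨L₂, rfl⟩, rfl⟩ := hx
    exact ⟨L₁.prod L₂, (dimVecR_prod k A e hid L₁ L₂).symm⟩
  have hnewton : newton k A e (M₁ × M₂) = newton k A e M₁ + newton k A e M₂ := by
    rw [newton, newton, newton, ← convexHull_add]
    apply Set.Subset.antisymm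
    · apply convexHull_min ?_ (convex_convexHull ℝ _)
      rintro x ⟨L, rfl⟩
      have ha : dimVecR k A e ((Submodule.comap (LinearMap.inl Aᵐᵒᵖ M₁ M₂) L).prod
          (Submodule.comap (LinearMap.inr Aᵐᵒᵖ M₁ M₂) L))
          ∈ {x | ∃ L : Submodule Aᵐᵒᵖ M₁, x = dimVecR k A e L}
            + {x | ∃ L : Submodule Aᵐᵒᵖ M₂, x = dimVecR k A e L} := by
        rw [dimVecR_prod k A e hid]
        exact Set.add_mem_add ⟨_, rfl⟩ ⟨_, rfl⟩
      have hb : dimVecR k A e ((Submodule.map (LinearMap.fst Aᵐᵒᵖ M₁ M₂) L).prod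
          (Submodule.map (LinearMap.snd Aᵐᵒᵖ M₁ M₂) L))
          ∈ {x | ∃ L : Submodule Aᵐᵒᵖ M₁, x = dimVecR k A e L}
            + {x | ∃ L : Submodule Aᵐᵒᵖ M₂, x = dimVecR k A e L} := by
        rw [dimVecR_prod k A e hid]
        exact Set.add_mem_add ⟨_, rfl⟩ ⟨_, rfl⟩
      rw [hmid L]
      exact (convex_convexHull ℝ _) (subset_convexHull ℝ _ ha)
        (subset_convexHull ℝ _ hb) (by norm_num) (by norm_num) (by norm_num)
    · exact convexHull_mono hS1
  refine ⟨htrop, hnewton, ?_⟩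
  intro L hL
  have hamem : dimVecR k A e ((Submodule.comap (LinearMap.inl Aᵐᵒᵖ M₁ M₂) L).prod
      (Submodule.comap (LinearMap.inr Aᵐᵒᵖ M₁ M₂) L)) ∈ newton k A e (M₁ × M₂) :=
    subset_convexHull ℝ _ ⟨_, rfl⟩
  have hbmem : dimVecR k A e ((Submodule.map (LinearMap.fst Aᵐᵒᵖ M₁ M₂) L).prod
      (Submodule.map (LinearMap.snd Aᵐᵒᵖ M₁ M₂) L)) ∈ newton k A e (M₁ × M₂) :=
    subset_convexHull ℝ _ ⟨_, rfl⟩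
  have haeq : dimVecR k A e ((Submodule.comap (LinearMap.inl Aᵐᵒᵖ M₁ M₂) L).prod
      (Submodule.comap (LinearMap.inr Aᵐᵒᵖ M₁ M₂) L)) = dimVecR k A e L := by
    by_cases hab : dimVecR k A e ((Submodule.comap (LinearMap.inl Aᵐᵒᵖ M₁ M₂) L).prod
        (Submodule.comap (LinearMap.inr Aᵐᵒᵖ M₁ M₂) L))
        = dimVecR k A e ((Submodule.map (LinearMap.fst Aᵐᵒᵖ M₁ M₂) L).prod
          (Submodule.map (LinearMap.snd Aᵐᵒᵖ M₁ M₂) L))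
    · have h := hmid L
      rw [← hab, ← add_smul] at h
      norm_num at h
      exact h.symm
    · exact (hL.2 hamem hbmem
        ⟨1/2, 1/2, by norm_num, by norm_num, by norm_num, (hmid L).symm⟩)
  have hdN : ∀ i, dN k A e ((Submodule.comap (LinearMap.inl Aᵐᵒᵖ M₁ M₂) L).prod
      (Submodule.comap (LinearMap.inr Aᵐᵒᵖ M₁ M₂) L)) i = dN k A e L i := by
    intro i
    have h := congrFun haeq i
    rw [dimVecR_eq_dN, dimVecR_eq_dN] at h
    exact_mod_cast h
  have hLe : (Submodule.comap (LinearMap.inl Aᵐᵒᵖ M₁ M₂) L).prod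
      (Submodule.comap (LinearMap.inr Aᵐᵒᵖ M₁ M₂) L) ≤ L := by
    rw [LinearMap.prod_eq_sup_map]
    refine sup_le ?_ ?_
    · rw [← inf_range_inl (A := A) L]; exact inf_le_left
    · rw [← inf_range_inr (A := A) L]; exact inf_le_left
  have hLeq : (Submodule.comap (LinearMap.inl Aᵐᵒᵖ M₁ M₂) L).prod
      (Submodule.comap (LinearMap.inr Aᵐᵒᵖ M₁ M₂) L) = L :=
    eq_of_le_of_dN k A e hsum hid hLe hdN
  have hLsum : dimVecR k A e L
      = dimVecR k A e (Submodule.comap (LinearMap.inl Aᵐᵒᵖ M₁ M₂) L)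
        + dimVecR k A e (Submodule.comap (LinearMap.inr Aᵐᵒᵖ M₁ M₂) L) := by
    conv_lhs => rw [← hLeq]
    exact dimVecR_prod k A e hid _ _
  have hd1 : dimVecR k A e
      (L ⊓ LinearMap.range (LinearMap.inl Aᵐᵒᵖ M₁ M₂) : Submodule Aᵐᵒᵖ (M₁ × M₂))
      = dimVecR k A e (Submodule.comap (LinearMap.inl Aᵐᵒᵖ M₁ M₂) L) := by
    rw [inf_range_inl (A := A) L]
    funext i
    rw [dimVecR_eq_dN, dimVecR_eq_dN, dN_map_inl k A e]
  have hd2 : dimVecR k A e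
      (L ⊓ LinearMap.range (LinearMap.inr Aᵐᵒᵖ M₁ M₂) : Submodule Aᵐᵒᵖ (M₁ × M₂))
      = dimVecR k A e (Submodule.comap (LinearMap.inr Aᵐᵒᵖ M₁ M₂) L) := by
    rw [inf_range_inr (A := A) L]
    funext i
    rw [dimVecR_eq_dN, dimVecR_eq_dN, dN_map_inr k A e]
  refine ⟨?_, ?_, ?_⟩
  · rw [inf_range_inl (A := A) L, inf_range_inr (A := A) L, ← LinearMap.prod_eq_sup_map, hLeq]
  · rw [hd1]
    refine ⟨subset_convexHull ℝ _ ⟨_, rfl⟩, ?_⟩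
    intro x₁ hx₁ x₂ hx₂ hseg
    have hc : dimVecR k A e (Submodule.comap (LinearMap.inr Aᵐᵒᵖ M₁ M₂) L)
        ∈ newton k A e M₂ := subset_convexHull ℝ _ ⟨_, rfl⟩
    have hLsum' : dimVecR k A e L
        = dimVecR k A e (Submodule.comap (LinearMap.inr Aᵐᵒᵖ M₁ M₂) L)
          + dimVecR k A e (Submodule.comap (LinearMap.inl Aᵐᵒᵖ M₁ M₂) L) := by
      rw [hLsum, add_comm]
    have hseg' : dimVecR k A e L ∈ openSegment ℝ
        (dimVecR k A e (Submodule.comap (LinearMap.inr Aᵐᵒᵖ M₁ M₂) L) + x₁)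
        (dimVecR k A e (Submodule.comap (LinearMap.inr Aᵐᵒᵖ M₁ M₂) L) + x₂) := by
      rw [hLsum']
      exact (mem_openSegment_translate ℝ _).mpr hseg
    have hm1 : dimVecR k A e (Submodule.comap (LinearMap.inr Aᵐᵒᵖ M₁ M₂) L) + x₁
        ∈ newton k A e (M₁ × M₂) := by
      rw [hnewton, add_comm (dimVecR k A e (Submodule.comap (LinearMap.inr Aᵐᵒᵖ M₁ M₂) L)) x₁]
      exact Set.add_mem_add hx₁ hc
    have hm2 : dimVecR k A e (Submodule.comap (LinearMap.inr Aᵐᵒᵖ M₁ M₂) L) + x₂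
        ∈ newton k A e (M₁ × M₂) := by
      rw [hnewton, add_comm (dimVecR k A e (Submodule.comap (LinearMap.inr Aᵐᵒᵖ M₁ M₂) L)) x₂]
      exact Set.add_mem_add hx₂ hc
    have hres := hL.2 hm1 hm2 hseg'
    have h1 := hres
    rw [hLsum'] at h1
    exact add_left_cancel h1
  · rw [hd2]
    refine ⟨subset_convexHull ℝ _ ⟨_, rfl⟩, ?_⟩
    intro x₁ hx₁ x₂ hx₂ hseg
    have hc : dimVecR k A e (Submodule.comap (LinearMap.inl Aᵐᵒᵖ M₁ M₂) L)
        ∈ newton k A e M₁ := subset_convexHull ℝ _ ⟨_, rfl⟩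
    have hseg' : dimVecR k A e L ∈ openSegment ℝ
        (dimVecR k A e (Submodule.comap (LinearMap.inl Aᵐᵒᵖ M₁ M₂) L) + x₁)
        (dimVecR k A e (Submodule.comap (LinearMap.inl Aᵐᵒᵖ M₁ M₂) L) + x₂) := by
      rw [hLsum]
      exact (mem_openSegment_translate ℝ _).mpr hseg
    have hm1 : dimVecR k A e (Submodule.comap (LinearMap.inl Aᵐᵒᵖ M₁ M₂) L) + x₁
        ∈ newton k A e (M₁ × M₂) := by
      rw [hnewton]
      exact Set.add_mem_add hc hx₁
    have hm2 : dimVecR k A e (Submodule.comap (LinearMap.inl Aᵐᵒᵖ M₁ M₂) L) + x₂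
        ∈ newton k A e (M₁ × M₂) := by
      rw [hnewton]
      exact Set.add_mem_add hc hx₂
    have hres := hL.2 hm1 hm2 hseg'
    have h1 := hres
    rw [hLsum] at h1
    exact add_left_cancel h1
end

section
/- Let L₀ ⊆ L₁ be submodules of a finite-dimensional right A-module M and δ ∈ ℤ^n. Then δ(dim L₀) = f_M(δ) and δ(dim L₁) = f_M(δ) hold simultaneously if and only if all of the following hold: f_{L₁/L₀}(δ) = 0, δ(dim L₁) = δ(dim L₀), f_{M/L₁}(δ) = 0, and δ(dim L₀) = f_{L₀}(δ). (Equivalently, δ lies in both normal cones F_{L₀}(M) and F_{L₁}(M) exactly when L₁/L₀ is δ-semistable, f_{M/L₁}(δ) = 0, and δ(dim L₀) = f_{L₀}(δ).) -/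
namespace TropGP

section Aux

open Module Submodule LinearMap MulOpposite

variable {k : Type} [Field k] {A : Type} [Ring A] [Algebra k A] {n : ℕ} {e : Fin n → A}

/-- A submodule of a finite-dimensional module is finite-dimensional over `k`. -/
instance fdSub (M : Type) [AddCommGroup M] [Module k M] [Module Aᵐᵒᵖ M]
    [IsScalarTower k Aᵐᵒᵖ M] [FiniteDimensional k M] (L : Submodule Aᵐᵒᵖ M) :
    FiniteDimensional k ↥L :=
  FiniteDimensional.of_injective ((L.subtype).restrictScalars k) L.injective_subtype

/-- A quotient of a finite-dimensional module is finite-dimensional over `k`. -/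
instance fdQuot (M : Type) [AddCommGroup M] [Module k M] [Module Aᵐᵒᵖ M]
    [IsScalarTower k Aᵐᵒᵖ M] [FiniteDimensional k M] (L : Submodule Aᵐᵒᵖ M) :
    FiniteDimensional k (M ⧸ L) :=
  Module.Finite.of_surjective ((L.mkQ).restrictScalars k) (Submodule.mkQ_surjective L)

/-- `dimVec` is invariant under `Aᵐᵒᵖ`-linear equivalence. -/
lemma dimVec_congr {M N : Type} [AddCommGroup M] [Module k M] [Module Aᵐᵒᵖ M]
    [IsScalarTower k Aᵐᵒᵖ M] [AddCommGroup N] [Module k N] [Module Aᵐᵒᵖ N]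
    [IsScalarTower k Aᵐᵒᵖ N] (f : M ≃ₗ[Aᵐᵒᵖ] N) :
    dimVec k A e M = dimVec k A e N := by
  funext i
  let g : M ≃ₗ[k] N := f.restrictScalars k
  have hcomm : (g : M →ₗ[k] N) ∘ₗ rmul k A e M i = (rmul k A e N i) ∘ₗ (g : M →ₗ[k] N) := by
    ext x
    show f (op (e i) • x) = op (e i) • f x
    exact map_smul f (op (e i)) x
  have hmap : Submodule.map (g : M →ₗ[k] N) (LinearMap.range (rmul k A e M i))
      = LinearMap.range (rmul k A e N i) := by
    rw [← LinearMap.range_comp, hcomm, LinearMap.range_comp, LinearEquiv.range,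
      Submodule.map_top]
  simp only [dimVec]
  congr 1
  rw [← hmap]
  exact (Submodule.equivMapOfInjective (g : M →ₗ[k] N) g.injective _).finrank_eq

/-- Additivity of `dimVec` in short exact sequences (needs idempotency of the `e i`). -/
lemma dimVec_add {M : Type} [AddCommGroup M] [Module k M] [Module Aᵐᵒᵖ M]
    [IsScalarTower k Aᵐᵒᵖ M] [FiniteDimensional k M]
    (hid : ∀ i, IsIdempotentElem (e i)) (L : Submodule Aᵐᵒᵖ M) (i : Fin n) :
    dimVec k A e M i = dimVec k A e L i + dimVec k A e (M ⧸ L) i := by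
  classical
  let r := rmul k A e M i
  let rL := rmul k A e (↥L) i
  let rQ := rmul k A e (M ⧸ L) i
  let π : M →ₗ[k] M ⧸ L := (L.mkQ).restrictScalars k
  let ι : ↥L →ₗ[k] M := (L.subtype).restrictScalars k
  let φ : ↥(LinearMap.range r) →ₗ[k] M ⧸ L := π ∘ₗ (LinearMap.range r).subtype
  have hπr : π ∘ₗ r = rQ ∘ₗ π := by
    ext x
    show L.mkQ (op (e i) • x) = op (e i) • L.mkQ x
    exact map_smul L.mkQ (op (e i)) x
  have hπsurj : Function.Surjective π := Submodule.mkQ_surjective L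
  have hrange : LinearMap.range φ = LinearMap.range rQ := by
    calc LinearMap.range φ = Submodule.map π (LinearMap.range r) := by
          rw [LinearMap.range_comp, Submodule.range_subtype]
      _ = LinearMap.range (π ∘ₗ r) := (LinearMap.range_comp _ _).symm
      _ = LinearMap.range (rQ ∘ₗ π) := by rw [hπr]
      _ = Submodule.map rQ (LinearMap.range π) := LinearMap.range_comp _ _
      _ = LinearMap.range rQ := by
          rw [LinearMap.range_eq_top.mpr hπsurj, Submodule.map_top]
  have hkerπ : LinearMap.ker π = Submodule.restrictScalars k L := by
    ext x
    simp only [LinearMap.mem_ker, Submodule.restrictScalars_mem]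
    show L.mkQ x = 0 ↔ x ∈ L
    rw [Submodule.mkQ_apply, Submodule.Quotient.mk_eq_zero]
  have hmapL : Submodule.map ι (LinearMap.range rL)
      = LinearMap.range r ⊓ Submodule.restrictScalars k L := by
    ext y
    constructor
    · rintro ⟨z, ⟨x, rfl⟩, rfl⟩
      refine ⟨⟨(x : M), rfl⟩, ?_⟩
      show ((rL x : ↥L) : M) ∈ L
      exact (rL x).2
    · rintro ⟨⟨x, hx⟩, hyL⟩
      have hyL' : y ∈ L := hyL
      have hy : op (e i) • y = y := by
        rw [← hx]
        show op (e i) • op (e i) • x = op (e i) • x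
        rw [smul_smul, ← MulOpposite.op_mul, hid i]
      refine ⟨rL ⟨y, hyL'⟩, ⟨⟨y, hyL'⟩, rfl⟩, ?_⟩
      show ((op (e i) • (⟨y, hyL'⟩ : ↥L) : ↥L) : M) = y
      rw [Submodule.coe_smul]
      exact hy
  have h1 : finrank k ↥(LinearMap.range φ) + finrank k ↥(LinearMap.ker φ)
      = finrank k ↥(LinearMap.range r) :=
    LinearMap.finrank_range_add_finrank_ker φ
  have h2 : finrank k ↥(LinearMap.ker φ) = finrank k ↥(LinearMap.range rL) := by
    have e1 : finrank k ↥(LinearMap.ker φ)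
        = finrank k ↥(Submodule.map (LinearMap.range r).subtype (LinearMap.ker φ)) :=
      (Submodule.equivMapOfInjective _ (LinearMap.range r).injective_subtype _).finrank_eq
    have e2 : Submodule.map (LinearMap.range r).subtype (LinearMap.ker φ)
        = LinearMap.range r ⊓ Submodule.restrictScalars k L := by
      rw [show LinearMap.ker φ = Submodule.comap (LinearMap.range r).subtype (LinearMap.ker π)
          from LinearMap.ker_comp _ _, Submodule.map_comap_subtype, hkerπ]
    have e3 : finrank k ↥(LinearMap.range rL)
        = finrank k ↥(Submodule.map ι (LinearMap.range rL)) :=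
      (Submodule.equivMapOfInjective ι Subtype.val_injective _).finrank_eq
    rw [e1, e2, ← hmapL, ← e3]
  have h3 : finrank k ↥(LinearMap.range φ) = finrank k ↥(LinearMap.range rQ) := by rw [hrange]
  show (finrank k ↥(LinearMap.range r) : ℤ)
      = (finrank k ↥(LinearMap.range rL) : ℤ) + (finrank k ↥(LinearMap.range rQ) : ℤ)
  rw [← h1, h2, h3]
  push_cast
  ring

/-- Relative additivity: `θ(N) = θ(L) + θ(N/L)` for `L ≤ N`. -/
lemma theta_rel {M : Type} [AddCommGroup M] [Module k M] [Module Aᵐᵒᵖ M]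
    [IsScalarTower k Aᵐᵒᵖ M] [FiniteDimensional k M]
    (hid : ∀ i, IsIdempotentElem (e i)) (δ : Fin n → ℤ)
    {L N : Submodule Aᵐᵒᵖ M} (h : L ≤ N) :
    pz δ (dimVec k A e N) = pz δ (dimVec k A e L)
      + pz δ (dimVec k A e (↥N ⧸ Submodule.comap N.subtype L)) := by
  have h1 : ∀ i, dimVec k A e N i = dimVec k A e (Submodule.comap N.subtype L) i
      + dimVec k A e (↥N ⧸ Submodule.comap N.subtype L) i :=
    fun i => dimVec_add hid (Submodule.comap N.subtype L) i
  have h2 : dimVec k A e (Submodule.comap N.subtype L) = dimVec k A e L :=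
    dimVec_congr (Submodule.comapSubtypeEquivOfLe h)
  simp only [pz]
  rw [← Finset.sum_add_distrib]
  refine Finset.sum_congr rfl fun i _ => ?_
  rw [h1 i, ← h2]
  ring

/-- A submodule of a submodule has the same `θ` as its image in the ambient module. -/
lemma theta_sub {M : Type} [AddCommGroup M] [Module k M] [Module Aᵐᵒᵖ M]
    [IsScalarTower k Aᵐᵒᵖ M] (δ : Fin n → ℤ) (N : Submodule Aᵐᵒᵖ M)
    (S : Submodule Aᵐᵒᵖ ↥N) :
    pz δ (dimVec k A e S) = pz δ (dimVec k A e (Submodule.map N.subtype S)) := by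
  rw [dimVec_congr (Submodule.equivSubtypeMap N S)]

/-- `θ` of a submodule of a quotient. -/
lemma theta_quot {M : Type} [AddCommGroup M] [Module k M] [Module Aᵐᵒᵖ M]
    [IsScalarTower k Aᵐᵒᵖ M] [FiniteDimensional k M]
    (hid : ∀ i, IsIdempotentElem (e i)) (δ : Fin n → ℤ) (L : Submodule Aᵐᵒᵖ M)
    (S : Submodule Aᵐᵒᵖ (M ⧸ L)) :
    pz δ (dimVec k A e S) + pz δ (dimVec k A e L)
      = pz δ (dimVec k A e (Submodule.comap L.mkQ S)) := by
  set N := Submodule.comap L.mkQ S with hN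
  have hLN : L ≤ N := by
    intro x hx
    show L.mkQ x ∈ S
    have : L.mkQ x = 0 := by rw [Submodule.mkQ_apply, Submodule.Quotient.mk_eq_zero]; exact hx
    rw [this]; exact S.zero_mem
  have hker : LinearMap.ker (L.mkQ ∘ₗ N.subtype) = Submodule.comap N.subtype L := by
    rw [LinearMap.ker_comp, Submodule.ker_mkQ]
  have hrange : LinearMap.range (L.mkQ ∘ₗ N.subtype) = S := by
    rw [LinearMap.range_comp, Submodule.range_subtype]
    exact Submodule.map_comap_eq_of_surjective (Submodule.mkQ_surjective L) S
  have E : (↥N ⧸ Submodule.comap N.subtype L) ≃ₗ[Aᵐᵒᵖ] ↥S :=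
    (Submodule.quotEquivOfEq _ _ hker.symm).trans
      ((LinearMap.quotKerEquivRange _).trans (LinearEquiv.ofEq _ _ hrange))
  rw [theta_rel (k := k) hid δ hLN, dimVec_congr E]
  ring

/-- Modularity: `θ(X ⊔ Y) + θ(X ⊓ Y) = θ(X) + θ(Y)`. -/
lemma theta_modular {M : Type} [AddCommGroup M] [Module k M] [Module Aᵐᵒᵖ M]
    [IsScalarTower k Aᵐᵒᵖ M] [FiniteDimensional k M]
    (hid : ∀ i, IsIdempotentElem (e i)) (δ : Fin n → ℤ) (X Y : Submodule Aᵐᵒᵖ M) :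
    pz δ (dimVec k A e ↥(X ⊔ Y)) + pz δ (dimVec k A e ↥(X ⊓ Y))
      = pz δ (dimVec k A e X) + pz δ (dimVec k A e Y) := by
  have h1 := theta_rel (k := k) (M := M) hid δ (le_sup_right : Y ≤ X ⊔ Y)
  have h2 := theta_rel (k := k) (M := M) hid δ (inf_le_left : X ⊓ Y ≤ X)
  have h4 : pz δ (dimVec k A e (↥X ⧸ Submodule.comap X.subtype (X ⊓ Y)))
      = pz δ (dimVec k A e (↥(X ⊔ Y) ⧸ Submodule.comap (X ⊔ Y).subtype Y)) := by
    rw [Submodule.comap_inf, dimVec_congr (LinearMap.quotientInfEquivSupQuotient X Y)]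
  linarith

lemma bddAbove_theta (M : Type) [AddCommGroup M] [Module k M] [Module Aᵐᵒᵖ M]
    [IsScalarTower k Aᵐᵒᵖ M] [FiniteDimensional k M] (δ : Fin n → ℤ) :
    BddAbove (Set.range fun L : Submodule Aᵐᵒᵖ M => pz δ (dimVec k A e L)) := by
  refine ⟨∑ i, |δ i| * (finrank k M : ℤ), ?_⟩
  rintro x ⟨L, rfl⟩
  simp only [pz]
  refine Finset.sum_le_sum fun i _ => ?_
  have h0 : (0:ℤ) ≤ dimVec k A e ↥L i := by
    simp only [dimVec]; exact Int.ofNat_nonneg _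
  have hub : dimVec k A e ↥L i ≤ (finrank k M : ℤ) := by
    simp only [dimVec]
    have ha : finrank k ↥(LinearMap.range (rmul k A e (↥L) i)) ≤ finrank k ↥L :=
      LinearMap.finrank_range_le _
    have hb : finrank k ↥L ≤ finrank k M :=
      LinearMap.finrank_le_finrank_of_injective
        (f := (L.subtype).restrictScalars k) L.injective_subtype
    exact_mod_cast le_trans ha hb
  calc δ i * dimVec k A e ↥L i ≤ |δ i| * dimVec k A e ↥L i :=
        mul_le_mul_of_nonneg_right (le_abs_self _) h0
    _ ≤ |δ i| * (finrank k M : ℤ) := mul_le_mul_of_nonneg_left hub (abs_nonneg _)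

lemma le_tropF (M : Type) [AddCommGroup M] [Module k M] [Module Aᵐᵒᵖ M]
    [IsScalarTower k Aᵐᵒᵖ M] [FiniteDimensional k M] (δ : Fin n → ℤ)
    (L : Submodule Aᵐᵒᵖ M) :
    pz δ (dimVec k A e L) ≤ tropF k A e M δ :=
  le_csSup (bddAbove_theta M δ) ⟨L, rfl⟩

lemma tropF_le (M : Type) [AddCommGroup M] [Module k M] [Module Aᵐᵒᵖ M]
    [IsScalarTower k Aᵐᵒᵖ M] (δ : Fin n → ℤ) {b : ℤ}
    (h : ∀ L : Submodule Aᵐᵒᵖ M, pz δ (dimVec k A e L) ≤ b) :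
    tropF k A e M δ ≤ b :=
  csSup_le ⟨_, ⟨⊥, rfl⟩⟩ (by rintro x ⟨L, rfl⟩; exact h L)

lemma theta_bot (M : Type) [AddCommGroup M] [Module k M] [Module Aᵐᵒᵖ M]
    [IsScalarTower k Aᵐᵒᵖ M] (δ : Fin n → ℤ) :
    pz δ (dimVec k A e (⊥ : Submodule Aᵐᵒᵖ M)) = 0 := by
  have hz : ∀ i, dimVec k A e (⊥ : Submodule Aᵐᵒᵖ M) i = 0 := by
    intro i
    simp only [dimVec]
    haveI : Subsingleton ↥(⊥ : Submodule Aᵐᵒᵖ M) := by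
      constructor; rintro ⟨x, hx⟩ ⟨y, hy⟩
      simp only [Submodule.mem_bot] at hx hy
      simp [hx, hy]
    rw [Module.finrank_zero_of_subsingleton]
    rfl
  simp [pz, hz]

lemma theta_top (M : Type) [AddCommGroup M] [Module k M] [Module Aᵐᵒᵖ M]
    [IsScalarTower k Aᵐᵒᵖ M] (δ : Fin n → ℤ) :
    pz δ (dimVec k A e (⊤ : Submodule Aᵐᵒᵖ M)) = pz δ (dimVec k A e M) := by
  rw [dimVec_congr (Submodule.topEquiv (R := Aᵐᵒᵖ) (M := M))]

lemma tropF_nonneg (M : Type) [AddCommGroup M] [Module k M] [Module Aᵐᵒᵖ M]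
    [IsScalarTower k Aᵐᵒᵖ M] [FiniteDimensional k M] (δ : Fin n → ℤ) :
    0 ≤ tropF k A e M δ := by
  have := le_tropF (k := k) (A := A) (e := e) M δ ⊥
  rwa [theta_bot] at this

end Aux

end TropGP

open TropGP Module MulOpposite

/-- For submodules `L₀ ⊆ L₁ ⊆ M` and `δ ∈ ℤⁿ`: both `δ(dim L₀) = f_M(δ)`
and `δ(dim L₁) = f_M(δ)` hold iff `f_{L₁/L₀}(δ) = 0`, `δ(dim L₁) = δ(dim L₀)`,
`f_{M/L₁}(δ) = 0` and `δ(dim L₀) = f_{L₀}(δ)`. -/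
theorem statement12 (k : Type) [Field k] [IsAlgClosed k] [CharZero k]
    (A : Type) [Ring A] [Algebra k A] [FiniteDimensional k A]
    {n : ℕ} (e : Fin n → A) (hA : IsBasicSetup A e)
    (M : Type) [AddCommGroup M] [Module k M] [Module Aᵐᵒᵖ M]
    [IsScalarTower k Aᵐᵒᵖ M] [FiniteDimensional k M]
    (L₀ L₁ : Submodule Aᵐᵒᵖ M) (hle : L₀ ≤ L₁) (δ : Fin n → ℤ) :
    (pz δ (dimVec k A e L₀) = tropF k A e M δ ∧
     pz δ (dimVec k A e L₁) = tropF k A e M δ) ↔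
      (tropF k A e (L₁ ⧸ (Submodule.comap L₁.subtype L₀)) δ = 0 ∧
       pz δ (dimVec k A e L₁) = pz δ (dimVec k A e L₀) ∧
       tropF k A e (M ⧸ L₁) δ = 0 ∧
       pz δ (dimVec k A e L₀) = tropF k A e L₀ δ) := by
  obtain ⟨hid, -⟩ := hA
  constructor
  · rintro ⟨h0, h1⟩
    refine ⟨?_, by rw [h0, h1], ?_, ?_⟩
    · -- `f_{L₁/L₀}(δ) = 0`
      refine le_antisymm (tropF_le _ δ fun S => ?_) (tropF_nonneg _ δ)
      have h5 := theta_quot (k := k) (M := ↥L₁) hid δ (Submodule.comap L₁.subtype L₀) S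
      have h6 : pz δ (dimVec k A e (Submodule.comap L₁.subtype L₀))
          = pz δ (dimVec k A e L₀) := by
        rw [dimVec_congr (Submodule.comapSubtypeEquivOfLe hle)]
      have h7 : pz δ (dimVec k A e
            (Submodule.comap (Submodule.comap L₁.subtype L₀).mkQ S))
          ≤ tropF k A e M δ := by
        rw [theta_sub δ L₁ _]
        exact le_tropF M δ _
      linarith [h0]
    · -- `f_{M/L₁}(δ) = 0`
      refine le_antisymm (tropF_le _ δ fun S => ?_) (tropF_nonneg _ δ)
      have h5 := theta_quot (k := k) (M := M) hid δ L₁ S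
      have h7 : pz δ (dimVec k A e (Submodule.comap L₁.mkQ S)) ≤ tropF k A e M δ :=
        le_tropF M δ _
      linarith [h1]
    · -- `θ(L₀) = f_{L₀}(δ)`
      refine le_antisymm ?_ (tropF_le _ δ fun S => ?_)
      · have := le_tropF (k := k) (A := A) (e := e) (↥L₀) δ ⊤
        rwa [theta_top] at this
      · rw [theta_sub δ L₀ S]
        exact (le_tropF M δ _).trans h0.ge
  · rintro ⟨c1, c2, c3, c4⟩
    have hmain : tropF k A e M δ = pz δ (dimVec k A e L₀) := by
      refine le_antisymm (tropF_le _ δ fun N => ?_) (le_tropF M δ L₀)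
      -- Step A : θ(N) ≤ θ(N ⊓ L₁)
      have hA1 : pz δ (dimVec k A e (Submodule.map L₁.mkQ N)) ≤ 0 := by
        rw [← c3]; exact le_tropF (M ⧸ L₁) δ _
      have hA2 := theta_quot (k := k) (M := M) hid δ L₁ (Submodule.map L₁.mkQ N)
      have hA3 : Submodule.comap L₁.mkQ (Submodule.map L₁.mkQ N) = N ⊔ L₁ := by
        rw [Submodule.comap_map_eq, Submodule.ker_mkQ]
      rw [hA3] at hA2
      have hAmod := theta_modular (k := k) (M := M) hid δ N L₁
      have hstepA : pz δ (dimVec k A e N) ≤ pz δ (dimVec k A e ↥(N ⊓ L₁)) := by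
        linarith
      -- Step B : θ(N ⊓ L₁) ≤ θ(N ⊓ L₀), working inside `L₁`
      set L₀' : Submodule Aᵐᵒᵖ ↥L₁ := Submodule.comap L₁.subtype L₀ with hL₀'
      set X' : Submodule Aᵐᵒᵖ ↥L₁ := Submodule.comap L₁.subtype N with hX'
      have hB1 : pz δ (dimVec k A e (Submodule.map L₀'.mkQ X')) ≤ 0 := by
        rw [← c1]; exact le_tropF _ δ _
      have hB2 := theta_quot (k := k) (M := ↥L₁) hid δ L₀' (Submodule.map L₀'.mkQ X')
      have hB3 : Submodule.comap L₀'.mkQ (Submodule.map L₀'.mkQ X') = X' ⊔ L₀' := by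
        rw [Submodule.comap_map_eq, Submodule.ker_mkQ]
      rw [hB3] at hB2
      have hBmod := theta_modular (k := k) (M := ↥L₁) hid δ X' L₀'
      have hBX : pz δ (dimVec k A e X') = pz δ (dimVec k A e ↥(N ⊓ L₁)) := by
        rw [theta_sub δ L₁ X', hX', Submodule.map_comap_subtype,
          inf_comm L₁ N]
      have hBinf : pz δ (dimVec k A e ↥(X' ⊓ L₀'))
          = pz δ (dimVec k A e ↥(N ⊓ L₀)) := by
        have hsub : Submodule.map L₁.subtype (X' ⊓ L₀') = N ⊓ L₀ := by
          rw [hX', hL₀', ← Submodule.comap_inf, Submodule.map_comap_subtype,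
            inf_eq_right.mpr (le_trans inf_le_right hle)]
        rw [theta_sub δ L₁ (X' ⊓ L₀'), hsub]
      have hstepB : pz δ (dimVec k A e ↥(N ⊓ L₁)) ≤ pz δ (dimVec k A e ↥(N ⊓ L₀)) := by
        linarith
      -- Step C : θ(N ⊓ L₀) ≤ θ(L₀)
      have hstepC : pz δ (dimVec k A e ↥(N ⊓ L₀)) ≤ pz δ (dimVec k A e L₀) := by
        have h := le_tropF (k := k) (A := A) (e := e) (↥L₀) δ (Submodule.comap L₀.subtype (N ⊓ L₀))
        rw [theta_sub δ L₀ _, Submodule.map_comap_subtype,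
          inf_eq_right.mpr (inf_le_right : N ⊓ L₀ ≤ L₀), ← c4] at h
        exact h
      linarith
    exact ⟨hmain.symm, by rw [c2]; exact hmain.symm⟩
end

section
/- Let d be a rigid projective presentation (E(d, Coker d) = 0), set C := Coker d, and let M be a finite-dimensional right A-module with dim_k Hom_A(C, M) = 1. Let L be the image of a nonzero homomorphism C → M. Then End_A(L) = k (L is Schur). If moreover there is an exact sequence 0 → M → I₀ → I₁ with I₀, I₁ injective such that the induced map Hom_A(M, I₀) → Hom_A(M, I₁) is surjective, then also Ext¹_A(L, L) = 0 (L is real Schur). -/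
open TropGP Module MulOpposite

/-- `Ext¹_A(L, L) = 0`: every self-extension `0 → L → E → L → 0` splits. -/
def Ext1SelfVanishes (A : Type) [Ring A] (L : Type) [AddCommGroup L] [Module Aᵐᵒᵖ L] : Prop :=
  ∀ (E : Type) (igE : AddCommGroup E), letI := igE;
  ∀ (imE : Module Aᵐᵒᵖ E), letI := imE;
  ∀ (ι : L →ₗ[Aᵐᵒᵖ] E) (π : E →ₗ[Aᵐᵒᵖ] L),
    Function.Injective ι → Function.Surjective π → LinearMap.range ι = LinearMap.ker π →
    ∃ σ : L →ₗ[Aᵐᵒᵖ] E, π ∘ₗ σ = LinearMap.id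

section Stmt15Aux

variable {R : Type} [Ring R]

/-- Descend a linear map through a surjection whose kernel it kills. -/
lemma aux_descend {X Y Z : Type} [AddCommGroup X] [Module R X] [AddCommGroup Y]
    [Module R Y] [AddCommGroup Z] [Module R Z] (p : X →ₗ[R] Y) (hp : Function.Surjective p)
    (f : X →ₗ[R] Z) (hf : ∀ x, p x = 0 → f x = 0) :
    ∃ gq : Y →ₗ[R] Z, ∀ x, gq (p x) = f x := by
  have hle : LinearMap.ker p ≤ LinearMap.ker f := fun x hx => hf x hx
  refine ⟨(LinearMap.ker p).liftQ f hle ∘ₗ (p.quotKerEquivOfSurjective hp).symm.toLinearMap,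
    fun x => ?_⟩
  have h1 : (p.quotKerEquivOfSurjective hp).symm (p x) = Submodule.Quotient.mk x := by
    apply (p.quotKerEquivOfSurjective hp).injective
    rw [LinearEquiv.apply_symm_apply]
    rfl
  simp [h1]

/-- Lift a linear map through an injection containing its range. -/
lemma aux_lift_inj {X Y Z : Type} [AddCommGroup X] [Module R X] [AddCommGroup Y] [Module R Y]
    [AddCommGroup Z] [Module R Z] (j : Y →ₗ[R] Z) (hj : Function.Injective j)
    (T : X →ₗ[R] Z) (hT : ∀ x, T x ∈ LinearMap.range j) :
    ∃ u : X →ₗ[R] Y, ∀ x, j (u x) = T x := by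
  refine ⟨(LinearEquiv.ofInjective j hj).symm.toLinearMap ∘ₗ T.codRestrict _ hT, fun x => ?_⟩
  have h2 : (LinearEquiv.ofInjective j hj)
      ((LinearEquiv.ofInjective j hj).symm ⟨T x, hT x⟩) = ⟨T x, hT x⟩ :=
    LinearEquiv.apply_symm_apply _ _
  have h3 := congrArg Subtype.val h2
  rw [LinearEquiv.ofInjective_apply] at h3
  simpa using h3

variable (A : Type) [Ring A] {n : ℕ} (e : Fin n → A)

open MulOpposite TropGP in
/-- The standard generator of the `(i,j)` coordinate of `PP A e β`. -/
noncomputable def ppEps (β : Fin n → ℕ) (i : Fin n) (j : Fin (β i)) : PP A e β :=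
  Pi.single i (Pi.single j ⟨e i, Submodule.mem_span_singleton_self _⟩)

open MulOpposite TropGP in
lemma pp_decomp (hidem : ∀ i, IsIdempotentElem (e i)) (β : Fin n → ℕ) (x : PP A e β) :
    ∑ i, ∑ j, op ((x i j : A)) • ppEps A e β i j = x := by
  classical
  funext i' j'
  have happ : (∑ i, ∑ j, op ((x i j : A)) • ppEps A e β i j) i' j'
      = ∑ i, ∑ j, ((op ((x i j : A)) • ppEps A e β i j) i' j') := by
    simp only [Finset.sum_apply]
  rw [happ, Finset.sum_eq_single i']
  · rw [Finset.sum_eq_single j']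
    · show (op ((x i' j' : A)) • ppEps A e β i' j') i' j' = x i' j'
      unfold ppEps
      rw [Pi.smul_apply, Pi.smul_apply, Pi.single_eq_same, Pi.single_eq_same]
      obtain ⟨b, hb⟩ := Submodule.mem_span_singleton.mp (x i' j').2
      have hxv : ((x i' j' : A)) = e i' * b.unop := by
        rw [← hb, MulOpposite.smul_eq_mul_unop]
      apply Subtype.ext
      show op ((x i' j' : A)) • (e i') = ((x i' j' : A))
      rw [MulOpposite.smul_eq_mul_unop, MulOpposite.unop_op]
      conv_lhs => rw [hxv]
      rw [← mul_assoc, hidem i', ← hxv]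
    · intro j_ _ hne
      show (op ((x i' j_ : A)) • ppEps A e β i' j_) i' j' = 0
      unfold ppEps
      rw [Pi.smul_apply, Pi.smul_apply, Pi.single_eq_same, Pi.single_eq_of_ne (Ne.symm hne)]
      simp
    · intro h; exact absurd (Finset.mem_univ j') h
  · intro i_ _ hne
    apply Finset.sum_eq_zero
    intro j _
    show (op ((x i_ j : A)) • ppEps A e β i_ j) i' j' = 0
    unfold ppEps
    rw [Pi.smul_apply, Pi.smul_apply, Pi.single_eq_of_ne (Ne.symm hne)]
    simp
  · intro h; exact absurd (Finset.mem_univ i') h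

open MulOpposite TropGP in
/-- The modules `PP A e β` are projective: maps out of them lift along surjections. -/
lemma pp_lift (hidem : ∀ i, IsIdempotentElem (e i)) (β : Fin n → ℕ) {X Y : Type}
    [AddCommGroup X] [Module Aᵐᵒᵖ X] [AddCommGroup Y] [Module Aᵐᵒᵖ Y]
    (p : X →ₗ[Aᵐᵒᵖ] Y) (hp : Function.Surjective p) (f : PP A e β →ₗ[Aᵐᵒᵖ] Y) :
    ∃ F : PP A e β →ₗ[Aᵐᵒᵖ] X, ∀ x, p (F x) = f x := by
  classical
  choose xc hxc using fun (i : Fin n) (j : Fin (β i)) => hp (f (ppEps A e β i j))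
  have key : ∀ (a : Aᵐᵒᵖ) (x : PP A e β) (Z : Type) (_ : AddCommGroup Z) (_ : Module Aᵐᵒᵖ Z)
      (z : ∀ i : Fin n, Fin (β i) → Z) (i : Fin n) (j : Fin (β i)),
      op (((a • x) i j : A)) • z i j = a • (op ((x i j : A)) • z i j) := by
    intro a x Z _ _ z i j
    have h1 : (((a • x) i j : A)) = (x i j : A) * a.unop := by
      rw [Pi.smul_apply, Pi.smul_apply]
      rw [SetLike.val_smul, MulOpposite.smul_eq_mul_unop]
    rw [h1, MulOpposite.op_mul, MulOpposite.op_unop, mul_smul]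
  refine ⟨{ toFun := fun x => ∑ i, ∑ j, op ((x i j : A)) • xc i j
            map_add' := ?_
            map_smul' := ?_ }, ?_⟩
  · intro x y
    simp only [Pi.add_apply, Submodule.coe_add, op_add, add_smul, Finset.sum_add_distrib]
  · intro a x
    simp only [RingHom.id_apply]
    calc ∑ i, ∑ j, op (((a • x) i j : A)) • xc i j
        = ∑ i, ∑ j, a • (op ((x i j : A)) • xc i j) :=
          Finset.sum_congr rfl fun i _ => Finset.sum_congr rfl fun j _ => key a x X _ _ xc i j
      _ = a • ∑ i, ∑ j, op ((x i j : A)) • xc i j := by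
          rw [Finset.smul_sum]
          exact Finset.sum_congr rfl fun i _ => (Finset.smul_sum).symm
  · intro x
    show p (∑ i, ∑ j, op ((x i j : A)) • xc i j) = f x
    have h1 : p (∑ i, ∑ j, op ((x i j : A)) • xc i j)
        = ∑ i, ∑ j, op ((x i j : A)) • f (ppEps A e β i j) := by
      rw [map_sum]
      refine Finset.sum_congr rfl fun i _ => ?_
      rw [map_sum]
      refine Finset.sum_congr rfl fun j _ => ?_
      rw [map_smul, hxc]
    rw [h1]
    conv_rhs => rw [← pp_decomp A e hidem β x]
    rw [map_sum]
    refine Finset.sum_congr rfl fun i _ => ?_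
    rw [map_sum]
    refine Finset.sum_congr rfl fun j _ => ?_
    rw [map_smul]

end Stmt15Aux

/-- Let `d` be a rigid presentation with cokernel `C` and let `M`
satisfy `dim_k Hom_A(C,M) = 1`.  The image `L` of a nonzero homomorphism `C → M` is
Schur; if moreover `M` admits an injective copresentation `0 → M → I₀ → I₁` with the
induced map `Hom(M,I₀) → Hom(M,I₁)` surjective, then `L` is real Schur. -/
theorem statement15 (k : Type) [Field k] [IsAlgClosed k] [CharZero k]
    (A : Type) [Ring A] [Algebra k A] [FiniteDimensional k A]
    {n : ℕ} (e : Fin n → A) (hA : IsBasicSetup A e)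
    (βm βp : Fin n → ℕ) (d : PP A e βm →ₗ[Aᵐᵒᵖ] PP A e βp)
    (hrig : Function.Surjective (homMap k A (Coker A e d) d))
    (M : Type) [AddCommGroup M] [Module k M] [Module Aᵐᵒᵖ M]
    [IsScalarTower k Aᵐᵒᵖ M] [FiniteDimensional k M]
    (hdim : finrank k (Coker A e d →ₗ[Aᵐᵒᵖ] M) = 1)
    (g : Coker A e d →ₗ[Aᵐᵒᵖ] M) (hg : g ≠ 0) :
    (∀ φ : LinearMap.range g →ₗ[Aᵐᵒᵖ] LinearMap.range g, ∃ c : k, φ = c • LinearMap.id) ∧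
    ((∃ (I₀ I₁ : Type) (ig₀ : AddCommGroup I₀) (ig₁ : AddCommGroup I₁),
        letI := ig₀; letI := ig₁;
        ∃ (im₀ : Module Aᵐᵒᵖ I₀) (im₁ : Module Aᵐᵒᵖ I₁),
          letI := im₀; letI := im₁;
          Module.Injective Aᵐᵒᵖ I₀ ∧ Module.Injective Aᵐᵒᵖ I₁ ∧
          ∃ (ι : M →ₗ[Aᵐᵒᵖ] I₀) (ψ : I₀ →ₗ[Aᵐᵒᵖ] I₁),
            Function.Injective ι ∧ LinearMap.range ι = LinearMap.ker ψ ∧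
            Function.Surjective (fun f : M →ₗ[Aᵐᵒᵖ] I₀ => ψ ∘ₗ f)) →
      Ext1SelfVanishes A (LinearMap.range g)) := by
  classical
  obtain ⟨hidem, -, -, -, -⟩ := hA
  -- every hom `C → M` is a scalar multiple of `g`
  have hspan : ∀ φ : Coker A e d →ₗ[Aᵐᵒᵖ] M, ∃ c : k, c • g = φ :=
    (finrank_eq_one_iff_of_nonzero' g hg).mp hdim
  set L : Submodule Aᵐᵒᵖ M := LinearMap.range g with hL
  set gr : Coker A e d →ₗ[Aᵐᵒᵖ] L := g.rangeRestrict with hgrdef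
  have hgr : Function.Surjective gr := g.surjective_rangeRestrict
  have hgr_coe : ∀ x, ((gr x : M)) = g x := fun x => rfl
  constructor
  · -- Schur property
    intro φ
    obtain ⟨c, hc⟩ := hspan (L.subtype ∘ₗ φ ∘ₗ gr)
    refine ⟨c, ?_⟩
    ext l
    obtain ⟨x, rfl⟩ := hgr l
    have h1 : (c • g) x = (L.subtype ∘ₗ φ ∘ₗ gr) x := by rw [hc]
    have h2 : ((φ (gr x)) : M) = c • g x := by
      simp only [LinearMap.smul_apply, LinearMap.comp_apply, Submodule.coe_subtype] at h1
      exact h1.symm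
    rw [h2]
    simp only [LinearMap.smul_apply, LinearMap.id_apply]
    rw [Submodule.coe_smul_of_tower, hgr_coe]
  · -- real Schur property
    rintro ⟨I₀, I₁, ig₀, ig₁, im₀, im₁, hinj₀, hinj₁, ι₀, ψ, hι₀, hrange, hsurj⟩
    intro E igE imE ι' π hι' hπ hrπ
    letI := igE; letI := imE
    -- Step 1: construct `u : E → M` with `u ∘ ι' = L.subtype`
    obtain ⟨U, hU⟩ := hinj₀.out ι' hι' (ι₀ ∘ₗ L.subtype)
    have hU' : ∀ l : L, U (ι' l) = ι₀ (l : M) := fun l => hU l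
    have hkerπ : ∀ x : E, π x = 0 → x ∈ LinearMap.range ι' := by
      intro x hx; rw [hrπ]; exact hx
    obtain ⟨V, hV⟩ := aux_descend π hπ (ψ ∘ₗ U) (by
      intro x hx
      obtain ⟨l, rfl⟩ := hkerπ x hx
      have : U (ι' l) ∈ LinearMap.ker ψ := by
        rw [hU' l, ← hrange]; exact ⟨(l : M), rfl⟩
      simpa using this)
    obtain ⟨Vt, hVt0⟩ := hinj₁.out L.subtype L.injective_subtype V
    have hVt : ∀ l : L, Vt (l : M) = V l := fun l => by
      have := hVt0 l
      simpa using this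
    obtain ⟨W, hW⟩ := hsurj Vt
    have hW' : ∀ m : M, ψ (W m) = Vt m := fun m => by
      have := congrArg (fun f : M →ₗ[Aᵐᵒᵖ] I₁ => f m) hW
      simpa using this
    set T : E →ₗ[Aᵐᵒᵖ] I₀ := U - W ∘ₗ L.subtype ∘ₗ π with hTdef
    have hT : ∀ x, T x ∈ LinearMap.range ι₀ := by
      intro x
      rw [hrange]
      show ψ (T x) = 0
      have : ψ (T x) = ψ (U x) - ψ (W ((π x : M))) := by
        simp [hTdef, map_sub]
      rw [this, hW' _, hVt (π x), hV x]
      simp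
    obtain ⟨u, hu⟩ := aux_lift_inj ι₀ hι₀ T hT
    have hu' : ∀ l : L, u (ι' l) = (l : M) := by
      intro l
      apply hι₀
      rw [hu (ι' l)]
      have hπι' : π (ι' l) = 0 := by
        have : ι' l ∈ LinearMap.ker π := by rw [← hrπ]; exact ⟨l, rfl⟩
        simpa using this
      simp [hTdef, hπι', hU' l]
    -- Step 2: construct `t : C → E` with `π ∘ t = gr`
    set q : PP A e βp →ₗ[Aᵐᵒᵖ] Coker A e d := (LinearMap.range d).mkQ with hqdef
    have hq : Function.Surjective q := Submodule.mkQ_surjective _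
    -- `E(d, L) = 0`
    have eDL : ∀ h : PP A e βm →ₗ[Aᵐᵒᵖ] L, ∃ γ : PP A e βp →ₗ[Aᵐᵒᵖ] L,
        ∀ y, γ (d y) = h y := by
      intro h
      obtain ⟨hh, hhh⟩ := pp_lift A e hidem βm gr hgr h
      obtain ⟨f', hf'⟩ := hrig hh
      have hf'' : ∀ y, f' (d y) = hh y := fun y =>
        congrArg (fun F : PP A e βm →ₗ[Aᵐᵒᵖ] Coker A e d => F y) hf'
      exact ⟨gr ∘ₗ f', fun y => by simp [hf'' y, hhh y]⟩
    obtain ⟨α, hα⟩ := pp_lift A e hidem βp π hπ (gr ∘ₗ q)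
    have hqd : ∀ y, q (d y) = 0 := by
      intro y
      simp [hqdef, Submodule.Quotient.mk_eq_zero]
    have hαd : ∀ y, α (d y) ∈ LinearMap.range ι' := by
      intro y
      apply hkerπ
      rw [hα (d y)]
      simp [hqd y]
    obtain ⟨bl, hbl⟩ := aux_lift_inj ι' hι' (α ∘ₗ d) (fun y => hαd y)
    obtain ⟨γ, hγ⟩ := eDL bl
    obtain ⟨t, ht⟩ := aux_descend q hq (α - ι' ∘ₗ γ) (by
      intro x hx
      obtain ⟨y, rfl⟩ : ∃ y, d y = x := by
        rw [hqdef] at hx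
        simpa using hx
      have h1 : ι' (γ (d y)) = α (d y) := by rw [hγ y]; exact hbl y
      simp [h1])
    have hπι' : ∀ l : L, π (ι' l) = 0 := by
      intro l
      have : ι' l ∈ LinearMap.ker π := by rw [← hrπ]; exact ⟨l, rfl⟩
      simpa using this
    have hπt : ∀ c : Coker A e d, π (t c) = gr c := by
      intro c
      obtain ⟨x, rfl⟩ := hq c
      rw [ht x]
      simp only [LinearMap.sub_apply, LinearMap.comp_apply, map_sub]
      rw [hα x, hπι' (γ x), sub_zero]
      rfl
    -- Step 3: `u ∘ t = c • g`, hence `t` kills `ker gr`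
    obtain ⟨c, hc⟩ := hspan (u ∘ₗ t)
    have hut : ∀ x, u (t x) = c • g x := by
      intro x
      have := congrArg (fun F : Coker A e d →ₗ[Aᵐᵒᵖ] M => F x) hc
      simpa using this.symm
    have htker : ∀ x, gr x = 0 → t x = 0 := by
      intro x hx
      have hgx : g x = 0 := by
        have := congrArg (Subtype.val) hx
        simpa [hgr_coe] using this
      obtain ⟨l, hl⟩ := hkerπ (t x) (by rw [hπt x, hx])
      have hlv : (l : M) = 0 := by
        rw [← hu' l, hl, hut x, hgx, smul_zero]
      have : l = 0 := Subtype.ext hlv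
      rw [← hl, this, map_zero]
    -- Step 4: descend `t` through `gr` to obtain the section
    obtain ⟨σ, hσ⟩ := aux_descend gr hgr t htker
    refine ⟨σ, ?_⟩
    ext l
    obtain ⟨x, rfl⟩ := hgr l
    simp only [LinearMap.comp_apply, LinearMap.id_apply]
    rw [hσ x, hπt x]
end

section
/- Suppose the finite-dimensional right A-module M is δ-stable for some δ ∈ ℤ^n. Then End_A(M) = k, and there exists ε > 0 such that M is δ′-semistable for every δ′ ∈ ℝ^n with δ′(dim M) = 0 and ‖δ′ − δ‖ < ε (semistability for real weights being defined by the same inequalities); that is, the cone of weights for which M is semistable contains a relatively open neighborhood of δ in the hyperplane {δ′ : δ′(dim M) = 0}. -/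
open TropGP Module MulOpposite

section Aux

variable (k : Type) [Field k]
variable (A : Type) [Ring A] [Algebra k A]
variable {n : ℕ} (e : Fin n → A)
variable (M : Type) [AddCommGroup M] [Module k M] [Module Aᵐᵒᵖ M] [IsScalarTower k Aᵐᵒᵖ M]

/-- The image `L·eᵢ` viewed as a `k`-subspace of `M`. -/
noncomputable def eSub (L : Submodule Aᵐᵒᵖ M) (i : Fin n) : Submodule k M :=
  Submodule.map (rmul k A e M i) (L.restrictScalars k)

lemma dimVec_apply (L : Submodule Aᵐᵒᵖ M) (i : Fin n) :
    dimVec k A e L i = (finrank k (eSub k A e M L i) : ℤ) := by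
  classical
  set ι : L →ₗ[k] M := LinearMap.restrictScalars k L.subtype with hιdef
  have hinj : Function.Injective ι := Subtype.val_injective
  have hcomm : ι ∘ₗ rmul k A e L i = (rmul k A e M i) ∘ₗ ι := by
    ext x; rfl
  have hrangeι : LinearMap.range ι = L.restrictScalars k := by
    ext x
    constructor
    · rintro ⟨y, rfl⟩; exact y.2
    · intro hx; exact ⟨⟨x, hx⟩, rfl⟩
  have h1 : Submodule.map ι (LinearMap.range (rmul k A e L i)) = eSub k A e M L i := by
    rw [← LinearMap.range_comp, hcomm, LinearMap.range_comp, hrangeι]; rfl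
  have h2 : finrank k (LinearMap.range (rmul k A e L i)) = finrank k (eSub k A e M L i) := by
    rw [← h1]
    exact (Submodule.equivMapOfInjective ι hinj _).finrank_eq
  simp [dimVec, h2]

lemma eSub_top (i : Fin n) :
    eSub k A e M ⊤ i = LinearMap.range (rmul k A e M i) := by
  rw [eSub, Submodule.restrictScalars_top, Submodule.map_top]

lemma eSub_bot (i : Fin n) : eSub k A e M (⊥ : Submodule Aᵐᵒᵖ M) i = ⊥ := by
  rw [eSub, Submodule.restrictScalars_bot, Submodule.map_bot]

lemma dimVec_top (i : Fin n) :
    dimVec k A e (⊤ : Submodule Aᵐᵒᵖ M) i = dimVec k A e M i := by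
  rw [dimVec_apply, eSub_top]; rfl

lemma dimVec_bot (i : Fin n) :
    dimVec k A e (⊥ : Submodule Aᵐᵒᵖ M) i = 0 := by
  rw [dimVec_apply, eSub_bot]; simp

lemma eSub_rank_add [FiniteDimensional k M] (i : Fin n) (hi : IsIdempotentElem (e i))
    (ψ : M →ₗ[Aᵐᵒᵖ] M) :
    finrank k (eSub k A e M (LinearMap.ker ψ) i) +
      finrank k (eSub k A e M (LinearMap.range ψ) i) =
    finrank k (LinearMap.range (rmul k A e M i)) := by
  classical
  set E : M →ₗ[k] M := rmul k A e M i with hE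
  set ψk : M →ₗ[k] M := LinearMap.restrictScalars k ψ with hψk
  have hcomm : ∀ m : M, ψ (E m) = E (ψ m) := fun m => ψ.map_smul (op (e i)) m
  set u : LinearMap.range E →ₗ[k] M := ψk ∘ₗ (LinearMap.range E).subtype with hu
  -- range of u
  have hrange : LinearMap.range u = eSub k A e M (LinearMap.range ψ) i := by
    ext x
    rw [hu, LinearMap.range_comp, Submodule.range_subtype]
    constructor
    · rintro ⟨y, ⟨m, rfl⟩, rfl⟩
      exact ⟨ψ m, ⟨m, rfl⟩, (hcomm m).symm⟩
    · rintro ⟨y, hy, rfl⟩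
      have hy' : y ∈ LinearMap.range ψ := hy
      obtain ⟨m, rfl⟩ := hy'
      exact ⟨E m, ⟨m, rfl⟩, hcomm m⟩
  -- kernel of u
  have hkermap : Submodule.map (LinearMap.range E).subtype (LinearMap.ker u)
      = eSub k A e M (LinearMap.ker ψ) i := by
    rw [hu, LinearMap.ker_comp, Submodule.map_comap_subtype]
    ext x
    constructor
    · rintro ⟨⟨m, rfl⟩, hx⟩
      have hEx : E (E m) = E m := by
        show op (e i) • (op (e i) • m) = op (e i) • m
        rw [← mul_smul, ← op_mul, hi.eq]
      refine ⟨E m, ?_, hEx⟩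
      show ψ (E m) = 0
      exact hx
    · rintro ⟨w, hw, rfl⟩
      have hw : ψ w = 0 := hw
      refine ⟨⟨w, rfl⟩, ?_⟩
      show ψ (E w) = 0
      rw [hcomm, hw, map_zero]
  have hker : finrank k (LinearMap.ker u) = finrank k (eSub k A e M (LinearMap.ker ψ) i) := by
    rw [← hkermap]
    exact (Submodule.equivMapOfInjective _ (Submodule.injective_subtype _) _).finrank_eq
  have hrn := LinearMap.finrank_range_add_finrank_ker u
  rw [hrange, hker] at hrn
  omega

lemma pz_ker_add_range [FiniteDimensional k M] (hi : ∀ i, IsIdempotentElem (e i))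
    (ψ : M →ₗ[Aᵐᵒᵖ] M) (δ : Fin n → ℤ) :
    pz δ (dimVec k A e (LinearMap.ker ψ)) + pz δ (dimVec k A e (LinearMap.range ψ))
      = pz δ (dimVec k A e M) := by
  rw [pz, pz, pz, ← Finset.sum_add_distrib]
  refine Finset.sum_congr rfl fun i _ => ?_
  rw [dimVec_apply k A e M (LinearMap.ker ψ) i, dimVec_apply k A e M (LinearMap.range ψ) i,
    ← mul_add]
  have h := eSub_rank_add k A e M i (hi i) ψ
  have : ((finrank k (eSub k A e M (LinearMap.ker ψ) i) : ℤ)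
      + (finrank k (eSub k A e M (LinearMap.range ψ) i) : ℤ))
      = dimVec k A e M i := by
    rw [dimVec]; exact_mod_cast h
  rw [this]

lemma schur_aux [FiniteDimensional k M] (δ : Fin n → ℤ) (hstab : IsStable k A e M δ)
    (hi : ∀ i, IsIdempotentElem (e i)) (ψ : M →ₗ[Aᵐᵒᵖ] M)
    (hker : LinearMap.ker ψ ≠ ⊥) : ψ = 0 := by
  by_contra hψ
  have hkt : LinearMap.ker ψ ≠ ⊤ := fun h => hψ (LinearMap.ker_eq_top.mp h)
  have h1 := hstab.2 _ hker hkt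
  have h2 := pz_ker_add_range k A e M hi ψ δ
  rw [hstab.1] at h2
  have hrb : LinearMap.range ψ ≠ ⊥ := fun h => hψ (LinearMap.range_eq_bot.mp h)
  rcases eq_or_ne (LinearMap.range ψ) ⊤ with ht | ht
  · have : pz δ (dimVec k A e (LinearMap.range ψ)) = pz δ (dimVec k A e M) := by
      rw [ht, pz, pz]
      exact Finset.sum_congr rfl fun i _ => by rw [dimVec_top]
    rw [this, hstab.1] at h2
    omega
  · have h3 := hstab.2 _ hrb ht
    omega

end Aux

/-- If `M` is `δ`-stable for some `δ ∈ ℤⁿ`, then `End_A(M) = k` and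
there is `ε > 0` such that `M` is `δ'`-semistable for every real weight `δ'` with
`δ'(dim M) = 0` and `‖δ' − δ‖ < ε`. -/
theorem statement19 (k : Type) [Field k] [IsAlgClosed k] [CharZero k]
    (A : Type) [Ring A] [Algebra k A] [FiniteDimensional k A]
    {n : ℕ} (e : Fin n → A) (hA : IsBasicSetup A e)
    (M : Type) [AddCommGroup M] [Module k M] [Module Aᵐᵒᵖ M]
    [IsScalarTower k Aᵐᵒᵖ M] [FiniteDimensional k M]
    (δ : Fin n → ℤ) (hstab : IsStable k A e M δ) :
    (∀ φ : M →ₗ[Aᵐᵒᵖ] M, ∃ c : k, φ = c • LinearMap.id) ∧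
    (∃ ε : ℝ, 0 < ε ∧ ∀ δ' : Fin n → ℝ,
      prr δ' (dimVecR k A e M) = 0 → ‖δ' - (fun i => (δ i : ℝ))‖ < ε →
      IsSemistableR k A e M δ') := by
  obtain ⟨hidem, -, -, -, -⟩ := hA
  constructor
  · -- Schur: End(M) = k
    intro φ
    by_cases hM : Subsingleton M
    · exact ⟨0, by ext x; exact Subsingleton.elim _ _⟩
    · have : Nontrivial M := not_subsingleton_iff_nontrivial.mp hM
      obtain ⟨c, hc⟩ :=
        Module.End.exists_eigenvalue (LinearMap.restrictScalars k φ : Module.End k M)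
      obtain ⟨v, hv⟩ := hc.exists_hasEigenvector
      refine ⟨c, ?_⟩
      have hz : (φ - c • LinearMap.id : M →ₗ[Aᵐᵒᵖ] M) = 0 := by
        apply schur_aux k A e M δ hstab hidem
        intro hbot
        have hvk : v ∈ LinearMap.ker (φ - c • LinearMap.id : M →ₗ[Aᵐᵒᵖ] M) := by
          rw [LinearMap.mem_ker]
          have : φ v = c • v := hv.apply_eq_smul
          simp [LinearMap.sub_apply, this]
        rw [hbot, Submodule.mem_bot] at hvk
        exact hv.2 hvk
      rw [sub_eq_zero] at hz
      exact hz
  · -- openness of the semistability condition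
    set D : ℝ := (finrank k M : ℝ) with hD
    have hD0 : 0 ≤ D := Nat.cast_nonneg _
    refine ⟨1 / (n * D + 1), by positivity, ?_⟩
    intro δ' h0 hnear
    have hcast : ∀ (L : Submodule Aᵐᵒᵖ M) (i : Fin n),
        dimVecR k A e L i = ((dimVec k A e L i : ℤ) : ℝ) := by
      intro L i; simp [dimVec, dimVecR]
    have hcastM : ∀ i : Fin n, dimVecR k A e M i = ((dimVec k A e M i : ℤ) : ℝ) := by
      intro i; simp [dimVec, dimVecR]
    refine ⟨h0, ?_⟩
    intro L
    rcases eq_or_ne L ⊥ with rfl | hb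
    · have : ∀ i, dimVecR k A e (⊥ : Submodule Aᵐᵒᵖ M) i = 0 := by
        intro i; rw [hcast, dimVec_bot]; norm_num
      simp [prr, this]
    rcases eq_or_ne L ⊤ with rfl | ht
    · have heq : prr δ' (dimVecR k A e (⊤ : Submodule Aᵐᵒᵖ M)) = prr δ' (dimVecR k A e M) := by
        rw [prr, prr]
        refine Finset.sum_congr rfl fun i _ => ?_
        rw [hcast, hcastM, dimVec_top]
      rw [heq, h0]
    · -- the main estimate
      have hlt := hstab.2 L hb ht
      have hle : (pz δ (dimVec k A e L) : ℝ) ≤ -1 := by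
        have : pz δ (dimVec k A e L) ≤ -1 := by omega
        exact_mod_cast this
      set w : Fin n → ℝ := δ' - (fun i => (δ i : ℝ)) with hw
      have hwn : ‖w‖ < 1 / (n * D + 1) := hnear
      have hbound : ∀ i : Fin n, (0 : ℝ) ≤ ((dimVec k A e L i : ℤ) : ℝ) ∧
          ((dimVec k A e L i : ℤ) : ℝ) ≤ D := by
        intro i
        rw [dimVec_apply]
        constructor
        · positivity
        · rw [hD]
          exact_mod_cast Submodule.finrank_le (eSub k A e M L i)
      have hsplit : prr δ' (dimVecR k A e L)
          = (pz δ (dimVec k A e L) : ℝ) + ∑ i, w i * ((dimVec k A e L i : ℤ) : ℝ) := by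
        rw [prr, pz]
        push_cast
        rw [← Finset.sum_add_distrib]
        refine Finset.sum_congr rfl fun i _ => ?_
        rw [hcast]
        simp [hw]
        ring
      have hterm : ∀ i : Fin n, w i * ((dimVec k A e L i : ℤ) : ℝ) ≤ ‖w‖ * D := by
        intro i
        have h1 : |w i| ≤ ‖w‖ := by
          have := norm_le_pi_norm w i
          simpa [Real.norm_eq_abs] using this
        have h2 := hbound i
        calc w i * ((dimVec k A e L i : ℤ) : ℝ)
            ≤ |w i| * ((dimVec k A e L i : ℤ) : ℝ) :=
              mul_le_mul_of_nonneg_right (le_abs_self _) h2.1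
          _ ≤ ‖w‖ * D := mul_le_mul h1 h2.2 h2.1 (norm_nonneg _)
      have hsum : ∑ i, w i * ((dimVec k A e L i : ℤ) : ℝ) ≤ n * (‖w‖ * D) := by
        calc ∑ i, w i * ((dimVec k A e L i : ℤ) : ℝ) ≤ ∑ _i : Fin n, ‖w‖ * D :=
              Finset.sum_le_sum fun i _ => hterm i
          _ = n * (‖w‖ * D) := by simp [Finset.sum_const, mul_comm]
      have hsmall : (n : ℝ) * (‖w‖ * D) < 1 := by
        have hnn : (0:ℝ) ≤ n * D := by positivity
        have h1 : (n : ℝ) * (‖w‖ * D) = (n * D) * ‖w‖ := by ring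
        rw [h1]
        have h2 : (n * D) * ‖w‖ ≤ (n * D + 1) * ‖w‖ := by
          have := norm_nonneg w
          nlinarith
        have h3 : (n * D + 1) * ‖w‖ < (n * D + 1) * (1 / (n * D + 1)) := by
          apply mul_lt_mul_of_pos_left hwn
          linarith
        have h4 : (n * D + 1) * (1 / (n * D + 1)) = 1 := by
          field_simp
        linarith
      rw [hsplit]
      linarith
end
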